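/- arXiv:math/9406217 — 6 statements merged into one kernel-verified Lean document; each statement's English description precedes it below -/
import Mathlib

section
/- Let K be a metric space and let f : K → ℂ be a bounded function belonging to D(K). Then: (b) the function |f| belongs to D(K) and ‖|f|‖_D ≤ ‖f‖_D; and (c) if inf_{k∈K} |f(k)| > 0, then the function 1/f belongs to D(K). -/
open Filter Set Topology ENNReal

noncomputable section

universe u v

/-- The `ℓ¹`-type bound `sup_k Σ_j |φ_j(k)|` of a sequence of functions, in `ℝ≥0∞`. -/
def DBound {K : Type u} [MetricSpace K] (φ : ℕ → K → ℂ) : ℝ≥0∞ :=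
  ⨆ k : K, ∑' j : ℕ, (‖φ j k‖₊ : ℝ≥0∞)

/-- `φ` is a sequence of continuous functions summing pointwise to `f`. -/
def IsDRep {K : Type u} [MetricSpace K] (f : K → ℂ) (φ : ℕ → K → ℂ) : Prop :=
  (∀ j, Continuous (φ j)) ∧ ∀ k, HasSum (fun j => φ j k) (f k)

/-- `f` belongs to `D(K)`: it has a representing sequence with finite bound. -/
def MemD {K : Type u} [MetricSpace K] (f : K → ℂ) : Prop :=
  ∃ φ : ℕ → K → ℂ, IsDRep f φ ∧ DBound φ < ⊤

/-- The `D`-norm of `f`, equal to `⊤` when `f ∉ D(K)`. -/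
def DNorm {K : Type u} [MetricSpace K] (f : K → ℂ) : ℝ≥0∞ :=
  ⨅ (φ : ℕ → K → ℂ) (_ : IsDRep f φ), DBound φ

/-- The quotient `D`-seminorm: distance in `D`-norm to the bounded continuous functions. -/
def qDNorm {K : Type u} [MetricSpace K] (f : K → ℂ) : ℝ≥0∞ :=
  ⨅ (φ : K → ℂ) (_ : Continuous φ ∧ ∃ C : ℝ, ∀ k, ‖φ k‖ ≤ C), DNorm (f - φ)

/-- Upper semicontinuous envelope of `g`, computed relative to the subspace `L`. -/
def uscEnvWithin {K : Type u} [MetricSpace K] (L : Set K) (g : K → ℝ≥0∞) (x : K) : ℝ≥0∞ :=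
  ⨅ U ∈ 𝓝 x, ⨆ y ∈ U ∩ L, g y

/-- `limsup_{y→x, y ∈ L} (|f(y) - f(x)| + g(y))` (non-exclusive limsup, relative to `L`). -/
def toscSuccWithin {K : Type u} [MetricSpace K] (f : K → ℂ) (L : Set K)
    (g : K → ℝ≥0∞) (x : K) : ℝ≥0∞ :=
  ⨅ U ∈ 𝓝 x, ⨆ y ∈ U ∩ L, ((‖f y - f x‖₊ : ℝ≥0∞) + g y)

/-- The finite oscillations `osc_n (f|_L)` of `f` restricted to `L`. -/
def oscNWithin {K : Type u} [MetricSpace K] (f : K → ℂ) (L : Set K) : ℕ → K → ℝ≥0∞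
  | 0 => fun _ => 0
  | n + 1 => uscEnvWithin L (toscSuccWithin f L (oscNWithin f L n))

/-- The oscillation `osc (f|_L)` of `f` restricted to `L`. -/
def oscWithin {K : Type u} [MetricSpace K] (f : K → ℂ) (L : Set K) : K → ℝ≥0∞ :=
  oscNWithin f L 1

/-- The finite oscillations `osc_n f`. -/
def oscN {K : Type u} [MetricSpace K] (f : K → ℂ) (n : ℕ) : K → ℝ≥0∞ :=
  oscNWithin f Set.univ n

/-- `osc_ω (f|_L)`: the usc envelope (relative to `L`) of `sup_n osc_n (f|_L)`. -/
def oscOmegaWithin {K : Type u} [MetricSpace K] (f : K → ℂ) (L : Set K) : K → ℝ≥0∞ :=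
  uscEnvWithin L (fun x => ⨆ n : ℕ, oscNWithin f L n x)

/-- `osc_ω f`. -/
def oscOmega {K : Type u} [MetricSpace K] (f : K → ℂ) : K → ℝ≥0∞ :=
  oscOmegaWithin f Set.univ

/-- `osc_{ω+1} (f|_L)`. -/
def oscOmegaSuccWithin {K : Type u} [MetricSpace K] (f : K → ℂ) (L : Set K) : K → ℝ≥0∞ :=
  uscEnvWithin L (toscSuccWithin f L (oscOmegaWithin f L))

/-- The oscillation sets `os_n(f, (ε_i))` (here `ε : ℕ → ℝ` is 0-indexed, so `ε 0 = ε_1`). -/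
def osSets {K : Type u} [MetricSpace K] (f : K → ℂ) (ε : ℕ → ℝ) : ℕ → Set K
  | 0 => Set.univ
  | n + 1 => {x ∈ osSets f ε n | ENNReal.ofReal (ε n) ≤ oscWithin f (osSets f ε n) x}

/-- The `ε`-Baire index `i_B(f, ε) = sup {n : os_n(f,ε) ≠ ∅} ∈ ℕ∞`. -/
def baireIndexE {K : Type u} [MetricSpace K] (f : K → ℂ) (ε : ℝ) : ℕ∞ :=
  ⨆ (n : ℕ) (_ : (osSets f (fun _ => ε) n).Nonempty), (n : ℕ∞)

/-- The Baire index `i_B(f) = sup_{ε > 0} i_B(f,ε)`. -/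
def baireIndexTotal {K : Type u} [MetricSpace K] (f : K → ℂ) : ℕ∞ :=
  ⨆ (ε : ℝ) (_ : 0 < ε), baireIndexE f ε

/-- The sets `os_n(f, ω, ε)` defined using `osc_ω` of successive restrictions. -/
def osOmegaSets {K : Type u} [MetricSpace K] (f : K → ℂ) (ε : ℝ≥0∞) : ℕ → Set K
  | 0 => Set.univ
  | n + 1 => {x ∈ osOmegaSets f ε n | ε ≤ oscOmegaWithin f (osOmegaSets f ε n) x}

/-- The index `i(f, ω, ε)`, valued in `ℝ≥0∞`. -/
def iOmega {K : Type u} [MetricSpace K] (f : K → ℂ) (ε : ℝ≥0∞) : ℝ≥0∞ :=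
  ⨆ (n : ℕ) (_ : (osOmegaSets f ε n).Nonempty), (n : ℝ≥0∞)

/-- The transfinite oscillations `osc_β f`. -/
def oscOrd {K : Type u} [MetricSpace K] (f : K → ℂ) (β : Ordinal.{v}) : K → ℝ≥0∞ :=
  Ordinal.limitRecOn β (fun _ => 0)
    (fun _ ih => uscEnvWithin Set.univ (toscSuccWithin f Set.univ ih))
    (fun γ _ ih => uscEnvWithin Set.univ (fun x => ⨆ (α : Ordinal) (h : α < γ), ih α h x))

/-- The weight of a topological space: least cardinality of a basis. -/
def tweight (K : Type u) [TopologicalSpace K] : Cardinal.{u} :=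
  ⨅ (B : Set (Set K)) (_ : TopologicalSpace.IsTopologicalBasis B), Cardinal.mk B

/-- `f` belongs to `B_{1/4}(K)`. -/
def MemB14 {K : Type u} [MetricSpace K] (f : K → ℂ) : Prop :=
  ∃ (g : ℕ → K → ℂ) (lam : ℝ≥0∞), lam < ⊤ ∧
    (∀ n, MemD (g n) ∧ DNorm (g n) ≤ lam) ∧ TendstoUniformly g f atTop

/-- The `B_{1/4}`-norm of `f`. -/
def B14Norm {K : Type u} [MetricSpace K] (f : K → ℂ) : ℝ≥0∞ :=
  ⨅ (lam : ℝ≥0∞) (_ : ∃ g : ℕ → K → ℂ,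
    (∀ n, MemD (g n) ∧ DNorm (g n) ≤ lam) ∧ TendstoUniformly g f atTop), lam

/-- `f` belongs to `SD(K)`: the closure in `D`-norm of the simple `D`-functions. -/
def MemSD {K : Type u} [MetricSpace K] (f : K → ℂ) : Prop :=
  MemD f ∧ ∀ ε : ℝ≥0∞, 0 < ε →
    ∃ φ : K → ℂ, (Set.range φ).Finite ∧ MemD φ ∧ DNorm (f - φ) < ε

/-- The algebra of sets generated by the open subsets of `K`. -/
inductive DAlg (K : Type u) [TopologicalSpace K] : Set K → Prop
  | basic (U : Set K) : IsOpen U → DAlg K U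
  | compl (A : Set K) : DAlg K A → DAlg K Aᶜ
  | union (A B : Set K) : DAlg K A → DAlg K B → DAlg K (A ∪ B)

/-- `W` is a difference of two closed sets. -/
def IsDCS {K : Type u} [TopologicalSpace K] (W : Set K) : Prop :=
  ∃ A B : Set K, IsClosed A ∧ IsClosed B ∧ W = A \ B

/-- The boundary of `A ∩ L` relative to the subspace `L`. -/
def relBoundary {K : Type u} [TopologicalSpace K] (L A : Set K) : Set K :=
  L ∩ closure (A ∩ L) ∩ closure (L \ A)

/-- The iterated boundaries `∂^n A` (with `∂^0 A = K`). -/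
def iterBoundary {K : Type u} [TopologicalSpace K] (A : Set K) : ℕ → Set K
  | 0 => Set.univ
  | n + 1 => relBoundary (iterBoundary A n) A

/-- The Baire index `i(A)` of a set: the largest `n` with `∂^n A ≠ ∅`. -/
def setIndex {K : Type u} [TopologicalSpace K] (A : Set K) : ℕ∞ :=
  ⨆ (n : ℕ) (_ : (iterBoundary A n).Nonempty), (n : ℕ∞)

/-- The iterated derived sets `K^{(n)}` of the space `K`. -/
def derivedIter (K : Type u) [TopologicalSpace K] : ℕ → Set K
  | 0 => Set.univ
  | n + 1 => {x | AccPt x (Filter.principal (derivedIter K n))}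

end

section stmt0helpers

variable {K : Type*} [MetricSpace K]

private lemma rep_summable0 {f : K → ℂ} {φ : ℕ → K → ℂ} (h : IsDRep f φ) (k : K) :
    Summable fun j => ‖φ j k‖ :=
  summable_norm_iff.mpr (h.2 k).summable

private lemma abs_rep0 {f : K → ℂ} {φ : ℕ → K → ℂ} (h : IsDRep f φ) :
    ∃ ψ : ℕ → K → ℂ, IsDRep (fun k => (‖f k‖ : ℂ)) ψ ∧ DBound ψ ≤ DBound φ := by
  classical
  set S : ℕ → K → ℂ := fun n k => ∑ j ∈ Finset.range n, φ j k with hS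
  have hScont : ∀ n, Continuous (S n) := fun n =>
    continuous_finset_sum _ fun j _ => h.1 j
  have key : ∀ n k, |‖S (n + 1) k‖ - ‖S n k‖| ≤ ‖φ n k‖ := by
    intro n k
    have h1 : S (n + 1) k - S n k = φ n k := by
      simp [hS, Finset.sum_range_succ]
    calc |‖S (n + 1) k‖ - ‖S n k‖| ≤ ‖S (n + 1) k - S n k‖ := abs_norm_sub_norm_le _ _
      _ = ‖φ n k‖ := by rw [h1]
  refine ⟨fun n k => ((‖S (n + 1) k‖ - ‖S n k‖ : ℝ) : ℂ), ⟨?_, ?_⟩, ?_⟩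
  · intro n
    exact Complex.continuous_ofReal.comp (((hScont (n + 1)).norm).sub ((hScont n).norm))
  · intro k
    set u : ℕ → ℝ := fun n => ‖S (n + 1) k‖ - ‖S n k‖ with hu
    have hus : Summable u :=
      Summable.of_norm_bounded (rep_summable0 h k) fun n => by
        simpa [hu, Real.norm_eq_abs] using key n k
    have hps : ∀ n, ∑ i ∈ Finset.range n, u i = ‖S n k‖ := by
      intro n
      have h2 := Finset.sum_range_sub (fun i => ‖S i k‖) n
      simpa [hu, hS] using h2
    have hlim : Tendsto (fun n => ‖S n k‖) atTop (𝓝 ‖f k‖) := ((h.2 k).tendsto_sum_nat).norm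
    have h3 : HasSum u (∑' n, u n) := hus.hasSum
    have h4 : Tendsto (fun n => ‖S n k‖) atTop (𝓝 (∑' n, u n)) := by
      have h5 := h3.tendsto_sum_nat
      simpa only [hps] using h5
    have h6 : HasSum u ‖f k‖ := by rwa [tendsto_nhds_unique h4 hlim] at h3
    exact Complex.ofRealCLM.hasSum h6
  · unfold DBound
    refine iSup_mono fun k => ENNReal.tsum_le_tsum fun n => ?_
    show (‖((‖S (n + 1) k‖ - ‖S n k‖ : ℝ) : ℂ)‖₊ : ℝ≥0∞) ≤ (‖φ n k‖₊ : ℝ≥0∞)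
    have h7 : ‖((‖S (n + 1) k‖ - ‖S n k‖ : ℝ) : ℂ)‖ ≤ ‖φ n k‖ := by
      rw [Complex.norm_real, Real.norm_eq_abs]
      exact key n k
    rw [← ((ofReal_norm _).trans (enorm_eq_nnnorm _)), ← ((ofReal_norm _).trans (enorm_eq_nnnorm _))]
    exact ENNReal.ofReal_le_ofReal h7

set_option maxHeartbeats 1000000 in
private lemma mul_rep0 {f g : K → ℂ} {φ ψ : ℕ → K → ℂ} (hφ : IsDRep f φ) (hψ : IsDRep g ψ) :
    ∃ χ : ℕ → K → ℂ, IsDRep (fun k => f k * g k) χ ∧ DBound χ ≤ DBound φ * DBound ψ := by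
  classical
  have e : ℕ ≃ ℕ × ℕ := (Denumerable.eqv (ℕ × ℕ)).symm
  refine ⟨fun n k => φ (e n).1 k * ψ (e n).2 k,
    ⟨fun n => (hφ.1 _).mul (hψ.1 _), fun k => ?_⟩, ?_⟩
  · have hs : Summable fun p : ℕ × ℕ => φ p.1 k * ψ p.2 k := by
      have hn : Summable fun p : ℕ × ℕ => ‖φ p.1 k * ψ p.2 k‖ :=
        Summable.mul_norm (f := fun j => φ j k) (g := fun j => ψ j k)
          (rep_summable0 hφ k) (rep_summable0 hψ k)
      exact hn.of_norm
    exact (Equiv.hasSum_iff e).mpr ((hφ.2 k).mul (hψ.2 k) hs)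
  · unfold DBound
    refine iSup_le fun k => ?_
    calc (∑' n, (‖φ (e n).1 k * ψ (e n).2 k‖₊ : ℝ≥0∞))
        = ∑' p : ℕ × ℕ, (‖φ p.1 k * ψ p.2 k‖₊ : ℝ≥0∞) :=
          e.tsum_eq fun p : ℕ × ℕ => (‖φ p.1 k * ψ p.2 k‖₊ : ℝ≥0∞)
      _ = ∑' p : ℕ × ℕ, (‖φ p.1 k‖₊ : ℝ≥0∞) * (‖ψ p.2 k‖₊ : ℝ≥0∞) := by
          simp [nnnorm_mul, ENNReal.coe_mul]
      _ = (∑' i, (‖φ i k‖₊ : ℝ≥0∞)) * ∑' j, (‖ψ j k‖₊ : ℝ≥0∞) := by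
          rw [ENNReal.tsum_prod' (f := fun p : ℕ × ℕ => (‖φ p.1 k‖₊ : ℝ≥0∞) * (‖ψ p.2 k‖₊ : ℝ≥0∞))]
          simp [ENNReal.tsum_mul_left, ENNReal.tsum_mul_right]
      _ ≤ (⨆ k : K, ∑' i, (‖φ i k‖₊ : ℝ≥0∞)) * ⨆ k : K, ∑' j, (‖ψ j k‖₊ : ℝ≥0∞) :=
          mul_le_mul' (le_iSup (fun k : K => ∑' i, (‖φ i k‖₊ : ℝ≥0∞)) k)
            (le_iSup (fun k : K => ∑' j, (‖ψ j k‖₊ : ℝ≥0∞)) k)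

private lemma inv_rep0 {h : K → ℂ} {χ : ℕ → K → ℂ} (hrep : IsDRep h χ)
    (hfin : DBound χ < ⊤) {a : ℝ} (ha : 0 < a)
    (him : ∀ k, (h k).im = 0) (hre : ∀ k, a ≤ (h k).re) :
    MemD fun k => (h k)⁻¹ := by
  classical
  set S : ℕ → K → ℂ := fun n k => ∑ j ∈ Finset.range n, χ j k with hS
  set t : ℕ → K → ℝ := fun n k => max ((S n k).re) (a / 2) with ht
  have ha2 : 0 < a / 2 := half_pos ha
  have ht_ge : ∀ n k, a / 2 ≤ t n k := fun n k => le_max_right _ _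
  have ht_pos : ∀ n k, 0 < t n k := fun n k => lt_of_lt_of_le ha2 (ht_ge n k)
  have inv_diff : ∀ x y : ℝ, a / 2 ≤ x → a / 2 ≤ y → |x⁻¹ - y⁻¹| ≤ (2 / a) ^ 2 * |x - y| := by
    intro x y hx hy
    have hx0 : 0 < x := lt_of_lt_of_le ha2 hx
    have hy0 : 0 < y := lt_of_lt_of_le ha2 hy
    have hxy : x⁻¹ - y⁻¹ = (y - x) * (x⁻¹ * y⁻¹) := by
      field_simp
    rw [hxy, abs_mul, abs_sub_comm]
    have h1 : |x⁻¹ * y⁻¹| ≤ (2 / a) ^ 2 := by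
      rw [abs_of_pos (by positivity)]
      have hx1 : x⁻¹ ≤ 2 / a := by
        rw [← inv_div a 2]
        exact inv_anti₀ ha2 hx
      have hy1 : y⁻¹ ≤ 2 / a := by
        rw [← inv_div a 2]
        exact inv_anti₀ ha2 hy
      calc x⁻¹ * y⁻¹ ≤ (2 / a) * (2 / a) :=
            mul_le_mul hx1 hy1 (by positivity) (by positivity)
        _ = (2 / a) ^ 2 := (sq (2 / a)).symm
    calc |x - y| * |x⁻¹ * y⁻¹| ≤ |x - y| * ((2 / a) ^ 2) :=
          mul_le_mul_of_nonneg_left h1 (abs_nonneg _)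
      _ = (2 / a) ^ 2 * |x - y| := mul_comm _ _
  have t_diff : ∀ n k, |t (n + 1) k - t n k| ≤ ‖χ n k‖ := by
    intro n k
    have h1 : (S (n + 1) k).re - (S n k).re = (χ n k).re := by
      simp [hS, Finset.sum_range_succ]
    calc |t (n + 1) k - t n k| ≤ |(S (n + 1) k).re - (S n k).re| :=
          abs_max_sub_max_le_abs _ _ _
      _ = |(χ n k).re| := by rw [h1]
      _ ≤ ‖χ n k‖ := by exact_mod_cast Complex.abs_re_le_norm (χ n k)
  have ht0 : ∀ k : K, t 0 k = a / 2 := by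
    intro k
    simp only [ht, hS, Finset.range_zero, Finset.sum_empty, Complex.zero_re]
    exact max_eq_right ha2.le
  have hnormbd : ∀ n (k : K),
      |(t (n + 1) k)⁻¹ - (t n k)⁻¹ + if n = 0 then 2 / a else 0|
        ≤ (2 / a) ^ 2 * ‖χ n k‖ + (if n = 0 then 2 / a else 0) := by
    intro n k
    have h1 : |(t (n + 1) k)⁻¹ - (t n k)⁻¹| ≤ (2 / a) ^ 2 * ‖χ n k‖ :=
      le_trans (inv_diff _ _ (ht_ge _ _) (ht_ge _ _))
        (mul_le_mul_of_nonneg_left (t_diff n k) (by positivity))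
    refine le_trans (abs_add_le _ _) (add_le_add h1 ?_)
    split
    · rw [abs_of_nonneg (by positivity)]
    · simp
  refine ⟨fun n k => (((t (n + 1) k)⁻¹ - (t n k)⁻¹ + if n = 0 then 2 / a else 0 : ℝ) : ℂ),
    ⟨?_, ?_⟩, ?_⟩
  · intro n
    have hc : ∀ m, Continuous fun k => (t m k)⁻¹ := by
      intro m
      exact ((Complex.continuous_re.comp (continuous_finset_sum _ fun j _ => hrep.1 j)).max
        continuous_const).inv₀ fun k => (ht_pos m k).ne'
    exact Complex.continuous_ofReal.comp (((hc (n + 1)).sub (hc n)).add continuous_const)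
  · intro k
    set u : ℕ → ℝ := fun n => (t (n + 1) k)⁻¹ - (t n k)⁻¹ + if n = 0 then 2 / a else 0 with hu
    have hsum_b : Summable fun n => (2 / a) ^ 2 * ‖χ n k‖ + (if n = 0 then 2 / a else 0) :=
      ((rep_summable0 hrep k).mul_left _).add (hasSum_ite_eq 0 (2 / a)).summable
    have hus : Summable u := Summable.of_norm_bounded hsum_b fun n => by
      simp only [hu, Real.norm_eq_abs]
      exact hnormbd n k
    have hps : ∀ n, ∑ i ∈ Finset.range n, u i
        = (t n k)⁻¹ - 2 / a + (if 0 ∈ Finset.range n then 2 / a else 0) := by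
      intro n
      rw [show (∑ i ∈ Finset.range n, u i)
          = (∑ i ∈ Finset.range n, ((t (i + 1) k)⁻¹ - (t i k)⁻¹))
            + ∑ i ∈ Finset.range n, (if i = 0 then 2 / a else 0) by
        rw [← Finset.sum_add_distrib]]
      rw [Finset.sum_range_sub (fun i => (t i k)⁻¹),
        Finset.sum_ite_eq' (Finset.range n) 0 fun _ => 2 / a, ht0 k, inv_div]
    have hlim_t : Tendsto (fun n => (t n k)⁻¹) atTop (𝓝 ((h k).re)⁻¹) := by
      have h1 : Tendsto (fun n => (S n k).re) atTop (𝓝 (h k).re) :=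
        (Complex.continuous_re.tendsto _).comp (hrep.2 k).tendsto_sum_nat
      have h2 : Tendsto (fun n => t n k) atTop (𝓝 (h k).re) := by
        have h3 := h1.max (tendsto_const_nhds (x := a / 2))
        rwa [max_eq_left (le_trans (half_le_self ha.le) (hre k))] at h3
      exact h2.inv₀ (ne_of_gt (lt_of_lt_of_le ha (hre k)))
    have hlim : Tendsto (fun n => ∑ i ∈ Finset.range n, u i) atTop (𝓝 ((h k).re)⁻¹) := by
      refine hlim_t.congr' ?_
      filter_upwards [eventually_ge_atTop 1] with n hn
      rw [hps n, if_pos (Finset.mem_range.mpr hn)]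
      ring
    have h3 : HasSum u (∑' n, u n) := hus.hasSum
    have h4 : HasSum u (((h k).re)⁻¹) := by
      rwa [tendsto_nhds_unique h3.tendsto_sum_nat hlim] at h3
    have h7 : ((((h k).re)⁻¹ : ℝ) : ℂ) = (h k)⁻¹ := by
      rw [Complex.ofReal_inv]
      congr 1
      exact Complex.ext rfl (by simp [him k])
    have h6 : HasSum (fun n => ((u n : ℝ) : ℂ)) ((((h k).re)⁻¹ : ℝ) : ℂ) :=
      Complex.ofRealCLM.hasSum h4
    rw [h7] at h6
    exact h6
  · have hbd : ∀ k : K,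
        (∑' n, (‖(((t (n + 1) k)⁻¹ - (t n k)⁻¹ + if n = 0 then 2 / a else 0 : ℝ) : ℂ)‖₊ : ℝ≥0∞))
          ≤ ENNReal.ofReal ((2 / a) ^ 2) * DBound χ + ENNReal.ofReal (2 / a) := by
      intro k
      have step : ∀ n,
          (‖(((t (n + 1) k)⁻¹ - (t n k)⁻¹ + if n = 0 then 2 / a else 0 : ℝ) : ℂ)‖₊ : ℝ≥0∞)
            ≤ ENNReal.ofReal ((2 / a) ^ 2) * (‖χ n k‖₊ : ℝ≥0∞)
              + (if n = 0 then ENNReal.ofReal (2 / a) else 0) := by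
        intro n
        rw [← ((ofReal_norm _).trans (enorm_eq_nnnorm _)), Complex.norm_real, Real.norm_eq_abs]
        refine le_trans (ENNReal.ofReal_le_ofReal (hnormbd n k)) ?_
        refine le_trans ENNReal.ofReal_add_le ?_
        refine add_le_add ?_ ?_
        · rw [ENNReal.ofReal_mul (by positivity), ((ofReal_norm _).trans (enorm_eq_nnnorm _))]
        · split <;> simp
      refine le_trans (ENNReal.tsum_le_tsum step) ?_
      rw [ENNReal.tsum_add, ENNReal.tsum_mul_left, tsum_ite_eq 0 (fun _ => ENNReal.ofReal (2 / a))]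
      refine add_le_add_left (mul_le_mul_right (α := ℝ≥0∞) ?_ _) _
      exact le_iSup (fun k : K => ∑' n, (‖χ n k‖₊ : ℝ≥0∞)) k
    refine lt_of_le_of_lt (iSup_le hbd) ?_
    exact ENNReal.add_lt_top.mpr
      ⟨ENNReal.mul_lt_top ENNReal.ofReal_lt_top hfin, ENNReal.ofReal_lt_top⟩

end stmt0helpers

/-- if `f ∈ D(K)` is bounded then `|f| ∈ D(K)` with `‖|f|‖_D ≤ ‖f‖_D`,
and if `inf_k |f(k)| > 0` then `1/f ∈ D(K)`. -/
theorem stmt0 {K : Type u} [MetricSpace K] (f : K → ℂ)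
    (hb : ∃ C : ℝ, ∀ k, ‖f k‖ ≤ C) (hf : MemD f) :
    (MemD (fun k => (‖f k‖ : ℂ)) ∧ DNorm (fun k => (‖f k‖ : ℂ)) ≤ DNorm f) ∧
    ((∃ δ : ℝ, 0 < δ ∧ ∀ k, δ ≤ ‖f k‖) → MemD (fun k => (f k)⁻¹)) := by
  obtain ⟨φ, hφ, hφfin⟩ := hf
  constructor
  · obtain ⟨ψ, hψ, hle⟩ := abs_rep0 hφ
    refine ⟨⟨ψ, hψ, lt_of_le_of_lt hle hφfin⟩, ?_⟩
    refine le_iInf fun φ' => le_iInf fun hφ' => ?_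
    obtain ⟨ψ', hψ', hle'⟩ := abs_rep0 hφ'
    calc DNorm (fun k => (‖f k‖ : ℂ)) ≤ DBound ψ' := by
          unfold DNorm
          exact iInf₂_le ψ' hψ'
      _ ≤ DBound φ' := hle'
  · rintro ⟨δ, hδ, hδf⟩
    have hconj : IsDRep (fun k => (starRingEnd ℂ) (f k)) fun n k => (starRingEnd ℂ) (φ n k) := by
      refine ⟨fun n => (hφ.1 n).star, fun k => ?_⟩
      exact (hφ.2 k).map ((starRingEnd ℂ).toAddMonoidHom) continuous_star
    have hconjb : DBound (fun n k => (starRingEnd ℂ) (φ n k)) = DBound φ := by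
      unfold DBound
      simp
    obtain ⟨χ, hχ, hχle⟩ := mul_rep0 hφ hconj
    have hχfin : DBound χ < ⊤ :=
      lt_of_le_of_lt hχle (ENNReal.mul_lt_top hφfin (hconjb ▸ hφfin))
    have him : ∀ k, (f k * (starRingEnd ℂ) (f k)).im = 0 := by
      intro k
      rw [Complex.mul_conj]
      simp
    have hre : ∀ k, δ ^ 2 ≤ (f k * (starRingEnd ℂ) (f k)).re := by
      intro k
      rw [Complex.mul_conj, Complex.ofReal_re, Complex.normSq_eq_norm_sq]
      exact pow_le_pow_left₀ hδ.le (hδf k) 2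
    have hinv := inv_rep0 hχ hχfin (pow_pos hδ 2) him hre
    obtain ⟨σ, hσ, hσfin⟩ := hinv
    obtain ⟨τ, hτ, hτle⟩ := mul_rep0 hconj hσ
    have heq : (fun k => (f k)⁻¹)
        = fun k => (starRingEnd ℂ) (f k) * (f k * (starRingEnd ℂ) (f k))⁻¹ := by
      funext k
      have hne : f k ≠ 0 := by
        intro h0
        have h1 := hδf k
        rw [h0, norm_zero] at h1
        exact absurd (lt_of_lt_of_le hδ h1) (lt_irrefl 0)
      have hcne : (starRingEnd ℂ) (f k) ≠ 0 := by simpa using hne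
      rw [mul_inv, mul_comm ((f k)⁻¹) (((starRingEnd ℂ) (f k))⁻¹), ← mul_assoc,
        mul_inv_cancel₀ hcne, one_mul]
    rw [heq]
    exact ⟨τ, hτ, lt_of_le_of_lt hτle (ENNReal.mul_lt_top (hconjb ▸ hφfin) hσfin)⟩
end

section
/- Let K be a metric space, W a nonempty subset of K (with the subspace metric), and g : W → ℝ a bounded real-valued function with g ∈ D(W). Then there exists a real-valued function g̃ : K → ℝ in D(K) with g̃|_W = g and ‖g̃‖_{D(K)} = ‖g‖_{D(W)}. -/
open Filter Set Topology ENNReal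

section AuxExt

variable {X : Type*} [MetricSpace X]

private lemma aux_lsc_tsum (h : ℕ → X → ℝ) (hc : ∀ n, Continuous (h n))
    (h0 : ∀ n x, 0 ≤ h n x) (hs : ∀ x, Summable fun n => h n x)
    (x : X) {δ : ℝ} (hδ : 0 < δ) :
    ∃ ρ > 0, ∀ y, dist y x < ρ → (∑' n, h n x) - δ < ∑' n, h n y := by
  obtain ⟨N, hN⟩ : ∃ N, (∑' n, h n x) - δ / 2 < ∑ i ∈ Finset.range N, h i x := by
    have h1 := (hs x).hasSum.tendsto_sum_nat
    have h2 : (∑' n, h n x) - δ / 2 < ∑' n, h n x := by linarith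
    exact (h1.eventually (eventually_gt_nhds h2)).exists
  have hcont : Continuous fun y => ∑ i ∈ Finset.range N, h i y :=
    continuous_finset_sum _ fun i _ => hc i
  have hopen : IsOpen {y : X | (∑' n, h n x) - δ / 2 < ∑ i ∈ Finset.range N, h i y} :=
    isOpen_lt continuous_const hcont
  obtain ⟨ρ, hρ, hball⟩ := Metric.isOpen_iff.1 hopen x hN
  refine ⟨ρ, hρ, fun y hy => ?_⟩
  have h3 : (∑' n, h n x) - δ / 2 < ∑ i ∈ Finset.range N, h i y := hball (Metric.mem_ball.2 hy)
  have h4 : ∑ i ∈ Finset.range N, h i y ≤ ∑' n, h n y :=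
    Summable.sum_le_tsum _ (fun i _ => h0 i y) (hs y)
  linarith

private lemma aux_yosida [Nonempty X] (h : X → ℝ) (h0 : ∀ x, 0 ≤ h x)
    (hlsc : ∀ x t, t < h x → ∃ r, 0 < r ∧ ∀ y, dist y x < r → t < h y) :
    ∃ A : ℕ → X → ℝ, (∀ n, Continuous (A n)) ∧ (∀ n x, 0 ≤ A n x) ∧
      (∀ n x, A n x ≤ A (n + 1) x) ∧ (∀ n x, A n x ≤ h x) ∧
      ∀ x, Tendsto (fun n => A n x) atTop (nhds (h x)) := by
  have hbdd : ∀ (n : ℕ) (x : X), BddBelow (Set.range fun y => h y + n * dist x y) := by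
    intro n x
    refine ⟨0, ?_⟩
    rintro _ ⟨y, rfl⟩
    have h1 := h0 y
    have h2 : (0:ℝ) ≤ dist x y := dist_nonneg
    positivity
  set A : ℕ → X → ℝ := fun n x => ⨅ y, (h y + n * dist x y) with hA
  have hAx : ∀ (n : ℕ) (x : X), A n x = ⨅ y, (h y + n * dist x y) := fun n x => rfl
  refine ⟨A, ?_, ?_, ?_, ?_, ?_⟩
  · -- continuity
    intro n
    have hkey : ∀ x z : X, A n x ≤ A n z + n * dist x z := by
      intro x z
      rw [hAx, hAx, ← sub_le_iff_le_add]
      refine le_ciInf fun y => ?_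
      have h1 : (⨅ y, (h y + n * dist x y)) ≤ h y + n * dist x y := ciInf_le (hbdd n x) y
      have h2 : dist x y ≤ dist x z + dist z y := dist_triangle x z y
      have h3 : (n:ℝ) * dist x y ≤ n * dist x z + n * dist z y := by
        rw [← mul_add]
        exact mul_le_mul_of_nonneg_left h2 (by positivity)
      linarith
    refine Metric.continuous_iff.2 fun x ε hε => ⟨ε / (n + 1), by positivity, fun y hy => ?_⟩
    have h1 := hkey x y
    have h2 := hkey y x
    have h7 : (n:ℝ) * dist x y = (n:ℝ) * dist y x := by rw [dist_comm]
    have h4 : (0:ℝ) ≤ dist y x := dist_nonneg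
    have h5 : (0:ℝ) ≤ (n:ℝ) := by positivity
    have h6 : (n:ℝ) * dist y x < ε := by
      have : ((n:ℝ)+1) * dist y x < ((n:ℝ)+1) * (ε / (n+1)) := by
        apply mul_lt_mul_of_pos_left hy (by positivity)
      have he : ((n:ℝ)+1) * (ε / (n+1)) = ε := by field_simp
      nlinarith
    rw [Real.dist_eq, abs_sub_lt_iff]
    constructor <;> linarith
  · intro n x
    rw [hAx]
    exact le_ciInf fun y => by have := h0 y; have : (0:ℝ) ≤ dist x y := dist_nonneg; positivity
  · intro n x
    rw [hAx, hAx]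
    refine le_ciInf fun y => (ciInf_le (hbdd n x) y).trans ?_
    have h2 : (0:ℝ) ≤ dist x y := dist_nonneg
    have h3 : (n:ℝ) ≤ ((n+1 : ℕ):ℝ) := by exact_mod_cast Nat.le_succ n
    nlinarith
  · intro n x
    rw [hAx]
    have := ciInf_le (hbdd n x) x
    simpa using this
  · intro x
    have hle : ∀ n : ℕ, A n x ≤ h x := by
      intro n; rw [hAx]; have := ciInf_le (hbdd n x) x; simpa using this
    have hmono' : Monotone fun n : ℕ => A n x := by
      apply monotone_nat_of_le_succ
      intro n
      rw [hAx, hAx]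
      refine le_ciInf fun y => (ciInf_le (hbdd n x) y).trans ?_
      have h2 : (0:ℝ) ≤ dist x y := dist_nonneg
      have h3 : (n:ℝ) ≤ ((n+1 : ℕ):ℝ) := by exact_mod_cast Nat.le_succ n
      nlinarith
    have hbdd' : BddAbove (Set.range fun n : ℕ => A n x) :=
      ⟨h x, by rintro _ ⟨n, rfl⟩; exact hle n⟩
    have h1 := tendsto_atTop_ciSup hmono' hbdd'
    have h2 : (⨆ n : ℕ, A n x) = h x := by
      refine le_antisymm (ciSup_le fun n => hle n) ?_
      refine le_of_forall_lt fun t ht => ?_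
      obtain ⟨r, hr, hball⟩ := hlsc x ((t + h x) / 2) (by linarith)
      obtain ⟨n, hn⟩ := exists_nat_ge ((t + h x) / 2 / r)
      have hnr : (t + h x) / 2 ≤ n * r := by
        rw [div_le_iff₀ hr] at hn; linarith
      have h3 : (t + h x) / 2 ≤ A n x := by
        rw [hAx]
        refine le_ciInf fun y => ?_
        rcases lt_or_ge (dist y x) r with hlt | hge
        · have h4 := (hball y hlt).le
          have h5 : (0:ℝ) ≤ (n:ℝ) * dist x y := by positivity
          linarith
        · have h5 : (n:ℝ) * r ≤ n * dist x y := by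
            apply mul_le_mul_of_nonneg_left _ (by positivity)
            rwa [dist_comm] at hge
          have h6 := h0 y
          linarith
      have h4 : A n x ≤ ⨆ n : ℕ, A n x :=
        le_ciSup hbdd' n
      linarith
    rwa [h2] at h1

end AuxExt


/-- every bounded real-valued `g ∈ D(W)`, `W ⊆ K` nonempty, extends to a
real-valued `g̃ ∈ D(K)` with `‖g̃‖_{D(K)} = ‖g‖_{D(W)}`. -/
theorem stmt1 {K : Type u} [MetricSpace K] (W : Set K) (hW : W.Nonempty)
    (g : W → ℝ) (hb : ∃ C : ℝ, ∀ w, |g w| ≤ C)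
    (hg : MemD (fun w : W => (g w : ℂ))) :
    ∃ gext : K → ℝ, MemD (fun k => (gext k : ℂ)) ∧
      (∀ w : W, gext w = g w) ∧
      DNorm (fun k => (gext k : ℂ)) = DNorm (fun w : W => (g w : ℂ)) := by
  classical
  obtain ⟨w₀, hw₀⟩ := hW
  haveI : Nonempty K := ⟨w₀⟩
  haveI hNW : Nonempty (↥W) := ⟨⟨w₀, hw₀⟩⟩
  have hDtop : DNorm (fun w : W => (g w : ℂ)) ≠ ⊤ := by
    obtain ⟨φ₀, hφ₀, hφ₀fin⟩ := hg
    have h1 : DNorm (fun w : W => (g w : ℂ)) ≤ DBound φ₀ := by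
      unfold DNorm
      exact iInf₂_le φ₀ hφ₀
    exact (h1.trans_lt hφ₀fin).ne
  set D : ℝ := (DNorm (fun w : W => (g w : ℂ))).toReal with hDdef
  have hD0 : 0 ≤ D := ENNReal.toReal_nonneg
  set ε : ℕ → ℝ := fun m => 1 / (m + 1) with hεdef
  have hεpos : ∀ m, 0 < ε m := fun m => by positivity
  have hεsmall : ∀ η : ℝ, 0 < η → ∃ m, ε m < η := fun η hη => exists_nat_one_div_lt hη
  -- Step A : budgets on W at every precision
  have hbud : ∀ m : ℕ, ∃ u : ↥W → ℝ,
      (∀ w, |g w| ≤ u w) ∧ (∀ w, u w ≤ D + ε m) ∧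
      ∀ (w : ↥W) (δ : ℝ), 0 < δ → ∃ ρ, 0 < ρ ∧ ∀ w' : ↥W, dist (w' : K) (w : K) < ρ →
        (u w + g w) - δ < u w' + g w' ∧ (u w - g w) - δ < u w' - g w' := by
    intro m
    have hlt : DNorm (fun w : W => (g w : ℂ)) <
        DNorm (fun w : W => (g w : ℂ)) + ENNReal.ofReal (ε m) :=
      ENNReal.lt_add_right hDtop (ENNReal.ofReal_pos.2 (hεpos m)).ne'
    unfold DNorm at hlt
    obtain ⟨φ, hφlt⟩ := iInf_lt_iff.1 hlt
    obtain ⟨hrep, hφlt⟩ := iInf_lt_iff.1 hφlt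
    obtain ⟨hcont, hsum⟩ := hrep
    have hfin : DBound φ < ⊤ :=
      hφlt.trans (ENNReal.add_lt_top.2 ⟨hDtop.lt_top, ENNReal.ofReal_lt_top⟩)
    have hsumm : ∀ w : ↥W, Summable fun r => ‖φ r w‖ := by
      intro w
      have h1 : (∑' r, (‖φ r w‖₊ : ℝ≥0∞)) ≤ DBound φ :=
        le_iSup (fun w => ∑' r, (‖φ r w‖₊ : ℝ≥0∞)) w
      have h2 : (∑' r, (‖φ r w‖₊ : ℝ≥0∞)) ≠ ⊤ := (h1.trans_lt hfin).ne
      have h3 := ENNReal.tsum_coe_ne_top_iff_summable.1 h2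
      simpa [← NNReal.summable_coe, coe_nnnorm] using h3
    have hsummre : ∀ w : ↥W, Summable fun r => |(φ r w).re| := by
      intro w
      refine Summable.of_nonneg_of_le (fun r => abs_nonneg _) (fun r => ?_) (hsumm w)
      simpa using Complex.abs_re_le_norm (φ r w)
    have hgre : ∀ w : ↥W, HasSum (fun r => (φ r w).re) (g w) := by
      intro w
      have h1 := Complex.reCLM.hasSum (hsum w)
      simpa using h1
    refine ⟨fun w => ∑' r, |(φ r w).re|, ?_, ?_, ?_⟩
    · intro w
      have h1 : |g w| = |∑' r, (φ r w).re| := by rw [(hgre w).tsum_eq]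
      rw [h1]
      simpa [Real.norm_eq_abs] using norm_tsum_le_tsum_norm (f := fun r => (φ r w).re)
        (by simpa [Real.norm_eq_abs] using hsummre w)
    · intro w
      have h3 : (∑' r, |(φ r w).re|) ≤ ∑' r, ‖φ r w‖ :=
        Summable.tsum_le_tsum (fun r => by
          simpa using Complex.abs_re_le_norm (φ r w))
          (hsummre w) (hsumm w)
      have h4 : ENNReal.ofReal (∑' r, ‖φ r w‖) = ∑' r, (‖φ r w‖₊ : ℝ≥0∞) := by
        rw [ENNReal.ofReal_tsum_of_nonneg (fun r => norm_nonneg _) (hsumm w)]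
        exact tsum_congr fun r => ofReal_norm _
      have h5 : ENNReal.ofReal (∑' r, ‖φ r w‖) ≤
          DNorm (fun w : W => (g w : ℂ)) + ENNReal.ofReal (ε m) := by
        rw [h4]
        exact (le_iSup (fun w => ∑' r, (‖φ r w‖₊ : ℝ≥0∞)) w).trans hφlt.le
      have h6 : (∑' r, ‖φ r w‖) ≤ D + ε m := by
        have h7 : 0 ≤ ∑' r, ‖φ r w‖ := tsum_nonneg fun r => norm_nonneg _
        have h8 := ENNReal.toReal_mono
          (by exact ENNReal.add_ne_top.2 ⟨hDtop, ENNReal.ofReal_ne_top⟩) h5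
        rwa [ENNReal.toReal_ofReal h7, ENNReal.toReal_add hDtop ENNReal.ofReal_ne_top,
          ENNReal.toReal_ofReal (hεpos m).le] at h8
      exact h3.trans h6
    · intro w δ hδ
      have hplus := aux_lsc_tsum (fun r w' => |(φ r w').re| + (φ r w').re)
        (fun r => ((Complex.continuous_re.comp (hcont r)).abs).add
          (Complex.continuous_re.comp (hcont r)))
        (fun r x => by show (0:ℝ) ≤ |(φ r x).re| + (φ r x).re; linarith [neg_abs_le ((φ r x).re)])
        (fun x => (hsummre x).add (hgre x).summable) w hδ
      have hminus := aux_lsc_tsum (fun r w' => |(φ r w').re| - (φ r w').re)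
        (fun r => ((Complex.continuous_re.comp (hcont r)).abs).sub
          (Complex.continuous_re.comp (hcont r)))
        (fun r x => by show (0:ℝ) ≤ |(φ r x).re| - (φ r x).re; linarith [le_abs_self ((φ r x).re)])
        (fun x => (hsummre x).sub (hgre x).summable) w hδ
      obtain ⟨ρ₁, hρ₁, hball₁⟩ := hplus
      obtain ⟨ρ₂, hρ₂, hball₂⟩ := hminus
      have htadd : ∀ x : ↥W, (∑' r, (|(φ r x).re| + (φ r x).re)) =
          (∑' r, |(φ r x).re|) + g x := by
        intro x
        rw [Summable.tsum_add (hsummre x) (hgre x).summable, (hgre x).tsum_eq]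
      have htsub : ∀ x : ↥W, (∑' r, (|(φ r x).re| - (φ r x).re)) =
          (∑' r, |(φ r x).re|) - g x := by
        intro x
        rw [Summable.tsum_sub (hsummre x) (hgre x).summable, (hgre x).tsum_eq]
      refine ⟨min ρ₁ ρ₂, lt_min hρ₁ hρ₂, fun w' hw' => ⟨?_, ?_⟩⟩
      · have h1 := hball₁ w' (by rw [Subtype.dist_eq]; exact hw'.trans_le (min_le_left _ _))
        rwa [htadd w, htadd w'] at h1
      · have h1 := hball₂ w' (by rw [Subtype.dist_eq]; exact hw'.trans_le (min_le_right _ _))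
        rwa [htsub w, htsub w'] at h1
  choose u hu1 hu2 hu3 using hbud
  have hgD : ∀ w, |g w| ≤ D := by
    intro w
    by_contra hcon
    push_neg at hcon
    obtain ⟨m, hm⟩ := hεsmall (|g w| - D) (by linarith)
    have h1 := (hu1 m w).trans (hu2 m w)
    linarith
  -- signed g
  set sg : Bool → ↥W → ℝ := fun b w => if b then g w else -g w with hsgdef
  have hsgD : ∀ b w, sg b w ≤ D := by
    intro b w
    have h1 := hgD w
    have h2 := le_abs_self (g w)
    have h3 := neg_abs_le (g w)
    cases b <;> simp only [hsgdef, Bool.false_eq_true, if_false, if_true] <;> linarith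
  have hsg_sum : ∀ w, sg true w + sg false w = 0 := by
    intro w; simp [hsgdef]
  -- joint modulus for the plateaus
  have hmod : ∀ p : ↥W × {d : ℝ // 0 < d} × ℕ, ∃ ρ, 0 < ρ ∧
      ∀ (b : Bool) (w' : ↥W), dist (w' : K) ((p.1 : ↥W) : K) < ρ →
        (u p.2.2 p.1 + sg b p.1) - p.2.1.1 < u p.2.2 w' + sg b w' := by
    intro p
    obtain ⟨ρ, hρ0, hρ⟩ := hu3 p.2.2 p.1 p.2.1.1 p.2.1.2
    refine ⟨ρ, hρ0, fun b w' hw' => ?_⟩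
    have h1 := hρ w' hw'
    cases b
    · simpa only [hsgdef, Bool.false_eq_true, if_false, ← sub_eq_add_neg] using h1.2
    · simpa only [hsgdef, if_true] using h1.1
  choose ρp hρp0 hρp using hmod
  -- plateau values and components
  set pv : Bool → (↥W × {d : ℝ // 0 < d} × ℕ) → ℝ :=
    fun b p => u p.2.2 p.1 + sg b p.1 - p.2.1.1 - ε p.2.2 with hpvdef
  have hpv_le : ∀ b p, pv b p ≤ D + sg b p.1 := by
    intro b p
    have h1 := hu2 p.2.2 p.1
    have h2 := p.2.1.2
    simp only [hpvdef]
    have h3 := hεpos p.2.2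
    linarith
  have hpv2D : ∀ b p, pv b p ≤ 2 * D := fun b p => (hpv_le b p).trans (by linarith [hsgD b p.1])
  set comp : Bool → (↥W × {d : ℝ // 0 < d} × ℕ) → K → ℝ :=
    fun b p k => if dist k ((p.1 : ↥W) : K) < ρp p / 2 then max (pv b p) 0 else 0 with hcompdef
  have hcomp_nonneg : ∀ b p k, 0 ≤ comp b p k := by
    intro b p k; simp only [hcompdef]; split
    · exact le_max_right _ _
    · exact le_rfl
  have hcomp2D : ∀ b p k, comp b p k ≤ 2 * D := by
    intro b p k; simp only [hcompdef]; split
    · exact max_le (hpv2D b p) (by linarith)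
    · linarith
  have hbddc : ∀ b k, BddAbove (Set.range fun p => comp b p k) :=
    fun b k => ⟨2 * D, by rintro _ ⟨p, rfl⟩; exact hcomp2D b p k⟩
  set H : Bool → K → ℝ := fun b k => ⨆ p, comp b p k with hHdef
  have hcomp_le_H : ∀ b p k, comp b p k ≤ H b k := by
    intro b p k
    exact le_ciSup (hbddc b k) p
  have hH0 : ∀ b k, 0 ≤ H b k :=
    fun b k => le_trans (hcomp_nonneg b ⟨⟨w₀, hw₀⟩, ⟨1, one_pos⟩, 0⟩ k)
      (hcomp_le_H b ⟨⟨w₀, hw₀⟩, ⟨1, one_pos⟩, 0⟩ k)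
  -- the key pairing estimate
  have hpair : ∀ p q k, comp true p k + comp false q k ≤ 2 * D := by
    intro p q k
    simp only [hcompdef]
    split_ifs with h1 h2 h2
    · have hsum : pv true p + pv false q ≤ 2 * D := by
        rcases le_total (ρp q) (ρp p) with hle | hle
        · have hdq : dist ((q.1 : ↥W) : K) ((p.1 : ↥W) : K) < ρp p := by
            calc dist ((q.1:↥W):K) ((p.1:↥W):K)
                ≤ dist ((q.1:↥W):K) k + dist k ((p.1:↥W):K) := dist_triangle _ _ _
              _ < ρp q / 2 + ρp p / 2 := by
                  rw [dist_comm ((q.1:↥W):K) k]; exact add_lt_add h2 h1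
              _ ≤ ρp p := by linarith
          have hm := hρp p true q.1 hdq
          have h3 := hu2 p.2.2 q.1
          have h4 := hpv_le false q
          have h6 := hsg_sum q.1
          simp only [hpvdef] at *
          linarith
        · have hdp : dist ((p.1 : ↥W) : K) ((q.1 : ↥W) : K) < ρp q := by
            calc dist ((p.1:↥W):K) ((q.1:↥W):K)
                ≤ dist ((p.1:↥W):K) k + dist k ((q.1:↥W):K) := dist_triangle _ _ _
              _ < ρp p / 2 + ρp q / 2 := by
                  rw [dist_comm ((p.1:↥W):K) k]; exact add_lt_add h1 h2
              _ ≤ ρp q := by linarith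
          have hm := hρp q false p.1 hdp
          have h3 := hu2 q.2.2 p.1
          have h4 := hpv_le true p
          have h6 := hsg_sum p.1
          simp only [hpvdef] at *
          linarith
      have hFD := hpv2D true p
      have hGD := hpv2D false q
      rcases max_cases (pv true p) 0 with ⟨e1, _⟩ | ⟨e1, _⟩ <;>
        rcases max_cases (pv false q) 0 with ⟨e2, _⟩ | ⟨e2, _⟩ <;> rw [e1, e2] <;> linarith
    · have := hpv2D true p
      have h0 : (0:ℝ) ≤ 2 * D := by linarith
      simpa using max_le this h0
    · have := hpv2D false q
      have h0 : (0:ℝ) ≤ 2 * D := by linarith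
      simpa using max_le this h0
    · linarith
  have hFG : ∀ k, H true k + H false k ≤ 2 * D := by
    intro k
    have h1 : H true k ≤ 2 * D - H false k := by
      rw [hHdef]
      refine ciSup_le fun p => ?_
      have h2 : H false k ≤ 2 * D - comp true p k := by
        rw [hHdef]
        refine ciSup_le fun q => ?_
        have := hpair p q k
        linarith
      linarith
    linarith
  have hH2D : ∀ b k, H b k ≤ 2 * D := by
    intro b k
    have h1 := hFG k
    cases b
    · have := hH0 true k; linarith
    · have := hH0 false k; linarith
  -- restriction of H to W
  set ubar : ↥W → ℝ := fun w => ⨆ m, (u m w - ε m) with hubardef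
  have hubarBdd : ∀ w : ↥W, BddAbove (Set.range fun m => u m w - ε m) := by
    intro w
    refine ⟨D, ?_⟩
    rintro _ ⟨m, rfl⟩
    have h1 := hu2 m w
    have h2 := hεpos m
    simp only
    linarith
  have hubar_ge : ∀ (m : ℕ) (w : ↥W), u m w - ε m ≤ ubar w := by
    intro m w
    rw [hubardef]
    exact le_ciSup (hubarBdd w) m
  have hubar_abs : ∀ w, |g w| ≤ ubar w := by
    intro w
    by_contra hcon
    push_neg at hcon
    obtain ⟨m, hm⟩ := hεsmall (|g w| - ubar w) (by linarith)
    have h1 := hubar_ge m w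
    have h2 := hu1 m w
    linarith
  have hubar_sg : ∀ b w, 0 ≤ ubar w + sg b w := by
    intro b w
    have h1 := hubar_abs w
    have h2 := le_abs_self (g w)
    have h3 := neg_abs_le (g w)
    cases b <;> simp only [hsgdef, Bool.false_eq_true, if_false, if_true] <;> linarith
  have hHrest : ∀ (b : Bool) (w : ↥W), H b (w : K) = ubar w + sg b w := by
    intro b w
    refine le_antisymm ?_ ?_
    · rw [hHdef]
      refine ciSup_le fun p => ?_
      simp only [hcompdef]
      split_ifs with h1
      · refine max_le ?_ (hubar_sg b w)
        have hd : dist ((w : ↥W) : K) ((p.1:↥W):K) < ρp p := by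
          have := hρp0 p; linarith
        have hm := hρp p b w hd
        have h2 := hubar_ge p.2.2 w
        simp only [hpvdef]
        linarith
      · exact hubar_sg b w
    · have key : ∀ m : ℕ, u m w + sg b w - ε m ≤ H b (w : K) := by
        intro m
        have key2 : ∀ δ : ℝ, 0 < δ → u m w + sg b w - ε m - δ ≤ H b (w:K) := by
          intro δ hδ
          have hin : dist ((w:↥W):K)
              ((((⟨w, ⟨δ, hδ⟩, m⟩ : ↥W × {d : ℝ // 0 < d} × ℕ)).1 : ↥W) : K) <
              ρp ⟨w, ⟨δ, hδ⟩, m⟩ / 2 := by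
            simp only [dist_self]
            linarith [hρp0 (⟨w, ⟨δ, hδ⟩, m⟩ : ↥W × {d : ℝ // 0 < d} × ℕ)]
          have h1 : comp b ⟨w, ⟨δ, hδ⟩, m⟩ ((w:↥W):K) = max (pv b ⟨w, ⟨δ, hδ⟩, m⟩) 0 := by
            simp only [hcompdef, if_pos hin]
          have h2 := hcomp_le_H b (⟨w, ⟨δ, hδ⟩, m⟩ : ↥W × {d : ℝ // 0 < d} × ℕ) ((w:↥W):K)
          rw [h1] at h2
          have h3 : pv b ⟨w, ⟨δ, hδ⟩, m⟩ ≤ H b ((w:↥W):K) := le_trans (le_max_left _ _) h2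
          simp only [hpvdef] at h3
          linarith
        by_contra hcon
        push_neg at hcon
        have h5 := key2 ((u m w + sg b w - ε m - H b (w:K)) / 2) (by linarith)
        linarith
      have h4 : ubar w ≤ H b (w:K) - sg b w := by
        rw [hubardef]
        refine ciSup_le fun m => ?_
        have h5 := key m
        show u m w - ε m ≤ H b (w:K) - sg b w
        linarith
      linarith
  -- lower semicontinuity data for H
  have hHlsc : ∀ b (x : K) (t : ℝ), t < H b x → ∃ r, 0 < r ∧ ∀ y, dist y x < r → t < H b y := by
    intro b x t ht
    rw [hHdef] at ht
    obtain ⟨p, hp⟩ := exists_lt_of_lt_ciSup ht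
    by_cases h1 : dist x ((p.1:↥W):K) < ρp p / 2
    · refine ⟨ρp p / 2 - dist x ((p.1:↥W):K), by linarith, fun y hy => ?_⟩
      have h2 : dist y ((p.1:↥W):K) < ρp p / 2 :=
        (dist_triangle y x _).trans_lt (by linarith)
      have h3 : comp b p y = comp b p x := by
        simp only [hcompdef, if_pos h1, if_pos h2]
      have h4 := hcomp_le_H b p y
      rw [h3] at h4
      exact lt_of_lt_of_le hp h4
    · have h0 : comp b p x = 0 := by simp only [hcompdef, if_neg h1]
      rw [h0] at hp
      exact ⟨1, one_pos, fun y _ => lt_of_lt_of_le hp (hH0 b y)⟩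
  -- Moreau–Yosida approximations
  obtain ⟨A, hAc, hA0, hAstep, hAle, hAtend⟩ := aux_yosida (H true) (hH0 true) (hHlsc true)
  obtain ⟨B, hBc, hB0, hBstep, hBle, hBtend⟩ := aux_yosida (H false) (hH0 false) (hHlsc false)
  set gext : K → ℝ := fun k => (H true k - H false k) / 2 with hgextdef
  have hrest : ∀ w : ↥W, gext ((w : ↥W) : K) = g w := by
    intro w
    have e1 : gext ((w : ↥W) : K) = (H true ((w:↥W):K) - H false ((w:↥W):K)) / 2 := rfl
    rw [e1, hHrest true w, hHrest false w]
    have e2 : sg true w = g w := by simp [hsgdef]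
    have e3 : sg false w = -g w := by simp [hsgdef]
    rw [e2, e3]; ring
  -- the representing series
  set S : ℕ → K → ℝ := fun n k => (A n k - B n k) / 2 with hSdef
  set T : ℕ → K → ℝ := fun n k => S n k - (if n = 0 then 0 else S (n - 1) k) with hTdef
  have hSe : ∀ n k, S n k = (A n k - B n k) / 2 := fun n k => rfl
  have hT0 : ∀ k, T 0 k = S 0 k := by
    intro k
    have : T 0 k = S 0 k - (if (0:ℕ) = 0 then 0 else S (0 - 1) k) := rfl
    rw [this]; simp
  have hTs : ∀ n k, T (n + 1) k = S (n + 1) k - S n k := by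
    intro n k
    have : T (n+1) k = S (n+1) k - (if n + 1 = 0 then 0 else S (n + 1 - 1) k) := rfl
    rw [this]; simp
  have hpartial : ∀ (k : K) (n : ℕ), ∑ i ∈ Finset.range (n + 1), T i k = S n k := by
    intro k n
    induction n with
    | zero => simpa using hT0 k
    | succ n ih => rw [Finset.sum_range_succ, ih, hTs]; ring
  have hTabs : ∀ (k : K) (n : ℕ), ∑ i ∈ Finset.range n, |T i k| ≤ D := by
    intro k n
    have hmain : ∀ n, ∑ i ∈ Finset.range (n + 1), |T i k| ≤ (A n k + B n k) / 2 := by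
      intro n
      induction n with
      | zero =>
        rw [Finset.sum_range_one, hT0 k, hSe]
        refine abs_le.2 ⟨?_, ?_⟩ <;>
          [linarith [hA0 0 k, hB0 0 k]; linarith [hA0 0 k, hB0 0 k]]
      | succ n ih =>
        rw [Finset.sum_range_succ, hTs]
        have h1 : |S (n + 1) k - S n k| ≤
            ((A (n + 1) k - A n k) + (B (n + 1) k - B n k)) / 2 := by
          rw [hSe, hSe]
          refine abs_le.2 ⟨?_, ?_⟩ <;>
            [linarith [hAstep n k, hBstep n k]; linarith [hAstep n k, hBstep n k]]
        linarith
    cases n with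
    | zero => simpa using hD0
    | succ n =>
      have h2 := hmain n
      have h3 : A n k + B n k ≤ 2 * D := by
        have h4 := hFG k
        have h5 := hAle n k
        have h6 := hBle n k
        linarith
      linarith
  have hSc : ∀ n, Continuous fun k => S n k := by
    intro n
    show Continuous fun k => (A n k - B n k) / 2
    exact ((hAc n).sub (hBc n)).div_const 2
  have hTc : ∀ n, Continuous fun k => T n k := by
    intro n
    show Continuous fun k => S n k - (if n = 0 then 0 else S (n - 1) k)
    by_cases hn : n = 0
    · subst hn
      simp only [if_pos rfl]
      exact (hSc 0).sub continuous_const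
    · simp only [if_neg hn]
      exact (hSc n).sub (hSc (n - 1))
  have hTsummable_abs : ∀ k, Summable fun n => |T n k| := fun k =>
    summable_of_sum_range_le (fun n => abs_nonneg _) (hTabs k)
  have hTtsum_le : ∀ k, (∑' n, |T n k|) ≤ D := fun k =>
    Summable.tsum_le_of_sum_range_le (hTsummable_abs k) (hTabs k)
  have hThasSum : ∀ k, HasSum (fun n => ((T n k : ℝ) : ℂ)) ((gext k : ℝ) : ℂ) := by
    intro k
    have hsummC : Summable fun n => ((T n k : ℝ) : ℂ) := by
      refine Summable.of_norm ?_
      simpa only [Complex.norm_real, Real.norm_eq_abs] using hTsummable_abs k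
    have h2 := hsummC.hasSum.tendsto_sum_nat
    have h3 : Tendsto (fun n => ∑ i ∈ Finset.range (n + 1), ((T i k : ℝ) : ℂ)) atTop
        (nhds (∑' n, ((T n k : ℝ) : ℂ))) := h2.comp (tendsto_add_atTop_nat 1)
    have h4 : (fun n => ∑ i ∈ Finset.range (n + 1), ((T i k : ℝ) : ℂ)) =
        fun n => ((S n k : ℝ) : ℂ) := by
      funext n
      rw [← hpartial k n]
      push_cast
      rfl
    rw [h4] at h3
    have h5 : Tendsto (fun n => S n k) atTop (nhds (gext k)) :=
      ((hAtend k).sub (hBtend k)).div_const 2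
    have h7 : Tendsto (fun n => ((S n k : ℝ) : ℂ)) atTop (nhds ((gext k : ℝ) : ℂ)) :=
      ((Complex.continuous_ofReal).tendsto _).comp h5
    have h8 : ((gext k : ℝ) : ℂ) = ∑' n, ((T n k : ℝ) : ℂ) := tendsto_nhds_unique h7 h3
    rw [h8]
    exact hsummC.hasSum
  have hIsRep : IsDRep (fun k => (gext k : ℂ)) (fun n k => ((T n k : ℝ) : ℂ)) :=
    ⟨fun n => Complex.continuous_ofReal.comp (hTc n), hThasSum⟩
  have hDB : DBound (fun n k => ((T n k : ℝ) : ℂ)) ≤ ENNReal.ofReal D := by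
    refine iSup_le fun k => ?_
    have hsumnorm : Summable fun n => ‖((T n k : ℝ) : ℂ)‖ := by
      simpa only [Complex.norm_real, Real.norm_eq_abs] using hTsummable_abs k
    have h1 : (∑' n, (‖((T n k : ℝ) : ℂ)‖₊ : ℝ≥0∞)) =
        ENNReal.ofReal (∑' n, ‖((T n k : ℝ) : ℂ)‖) := by
      rw [ENNReal.ofReal_tsum_of_nonneg (fun n => norm_nonneg _) hsumnorm]
      exact tsum_congr fun n => (ofReal_norm _).symm
    rw [h1]
    apply ENNReal.ofReal_le_ofReal
    have h2 : (∑' n, ‖((T n k : ℝ) : ℂ)‖) = ∑' n, |T n k| :=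
      tsum_congr fun n => by simp [Complex.norm_real, Real.norm_eq_abs]
    rw [h2]
    exact hTtsum_le k
  have hle : DNorm (fun k => (gext k : ℂ)) ≤ DNorm (fun w : W => (g w : ℂ)) := by
    have h1 : DNorm (fun k => (gext k : ℂ)) ≤ DBound (fun n k => ((T n k : ℝ) : ℂ)) := by
      unfold DNorm
      exact iInf₂_le _ hIsRep
    calc DNorm (fun k => (gext k : ℂ)) ≤ ENNReal.ofReal D := h1.trans hDB
      _ = DNorm (fun w : W => (g w : ℂ)) := by rw [hDdef]; exact ENNReal.ofReal_toReal hDtop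
  have hge : DNorm (fun w : W => (g w : ℂ)) ≤ DNorm (fun k => (gext k : ℂ)) := by
    unfold DNorm
    refine le_iInf fun Φ => le_iInf fun hΦ => ?_
    have hres : IsDRep (fun w : W => (g w : ℂ)) (fun j (w : ↥W) => Φ j ((w : ↥W) : K)) := by
      constructor
      · exact fun j => (hΦ.1 j).comp continuous_subtype_val
      · intro w
        have h1 : HasSum (fun j => Φ j ((w : ↥W) : K)) ((gext ((w : ↥W) : K) : ℝ) : ℂ) :=
          hΦ.2 ((w : ↥W) : K)
        rw [hrest w] at h1
        exact h1
    refine (iInf₂_le (fun j (w : ↥W) => Φ j ((w : ↥W) : K)) hres).trans ?_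
    refine iSup_le fun w => ?_
    exact le_iSup (fun k => ∑' j, (‖Φ j k‖₊ : ℝ≥0∞)) ((w : ↥W) : K)
  exact ⟨gext, ⟨fun n k => ((T n k : ℝ) : ℂ), hIsRep,
    lt_of_le_of_lt hDB ENNReal.ofReal_lt_top⟩, hrest, le_antisymm hle hge⟩
end

section
/- Let K be a metric space, W a nonempty subset of K, and f : W → ℂ a bounded function with f ∈ D(W). Let f·χ_W : K → ℂ denote the function equal to f on W and to 0 off W. If W is a DCS (a difference of two closed sets), then f·χ_W ∈ D(K) and ‖f·χ_W‖_{D(K)} ≤ 2‖f‖_{D(W)}; if W is open, then ‖f·χ_W‖_{D(K)} = ‖f‖_{D(W)}. -/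
open Filter Set Topology ENNReal

/- ===== auxiliary machinery for stmt2 ===== -/

noncomputable section Stmt2Helpers
universe u'
open Metric

section Aux
open Metric
variable {X : Type u'} [MetricSpace X]

lemma tsum_nn_le_dbound (φ : ℕ → X → ℂ) (x : X) :
    ∑' j : ℕ, (‖φ j x‖₊ : ℝ≥0∞) ≤ DBound φ :=
  le_iSup (fun k => ∑' j : ℕ, (‖φ j k‖₊ : ℝ≥0∞)) x

lemma summable_nn_of_dbound {φ : ℕ → X → ℂ} (h : DBound φ ≠ ⊤) (x : X) :
    Summable fun j => ‖φ j x‖₊ := by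
  rw [← ENNReal.tsum_coe_ne_top_iff_summable]
  exact ne_top_of_le_ne_top h (tsum_nn_le_dbound φ x)

lemma summable_of_dbound {φ : ℕ → X → ℂ} (h : DBound φ ≠ ⊤) (x : X) :
    Summable fun j => φ j x :=
  Summable.of_nnnorm (summable_nn_of_dbound h x)

lemma restrict_dbound (W : Set X) (ψ : ℕ → X → ℂ) :
    DBound (fun j (w : W) => ψ j ↑w) ≤ DBound ψ :=
  iSup_le fun w => le_iSup_of_le (w : X) le_rfl

lemma interleave_rep {g₁ g₂ g : X → ℂ} {ψ ρ : ℕ → X → ℂ}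
    (h₁ : IsDRep g₁ ψ) (h₂ : IsDRep g₂ ρ) (hg : ∀ x, g x = g₁ x + g₂ x) :
    ∃ χ : ℕ → X → ℂ, IsDRep g χ ∧ DBound χ ≤ DBound ψ + DBound ρ := by
  refine ⟨fun n => if n % 2 = 0 then ψ (n / 2) else ρ (n / 2), ⟨?_, ?_⟩, ?_⟩
  · intro j; dsimp only; split
    exacts [h₁.1 _, h₂.1 _]
  · intro x
    rw [hg]
    have he : (fun k : ℕ => (if (2 * k) % 2 = 0 then ψ ((2 * k) / 2) else ρ ((2 * k) / 2)) x)
        = fun k => ψ k x := by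
      funext k
      rw [if_pos (by omega)]
      have : 2 * k / 2 = k := by omega
      rw [this]
    have ho : (fun k : ℕ => (if (2 * k + 1) % 2 = 0 then ψ ((2 * k + 1) / 2) else ρ ((2 * k + 1) / 2)) x)
        = fun k => ρ k x := by
      funext k
      rw [if_neg (by omega)]
      have : (2 * k + 1) / 2 = k := by omega
      rw [this]
    exact HasSum.even_add_odd (he ▸ h₁.2 x) (ho ▸ h₂.2 x)
  · refine iSup_le fun x => ?_
    rw [← tsum_even_add_odd (f := fun n => (‖(if n % 2 = 0 then ψ (n / 2) else ρ (n / 2)) x‖₊ : ℝ≥0∞))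
      ENNReal.summable ENNReal.summable]
    have he : ∀ k : ℕ, (‖(if (2 * k) % 2 = 0 then ψ ((2 * k) / 2) else ρ ((2 * k) / 2)) x‖₊ : ℝ≥0∞)
        = ‖ψ k x‖₊ := by
      intro k; rw [if_pos (by omega)]
      have : 2 * k / 2 = k := by omega
      rw [this]
    have ho : ∀ k : ℕ, (‖(if (2 * k + 1) % 2 = 0 then ψ ((2 * k + 1) / 2) else ρ ((2 * k + 1) / 2)) x‖₊ : ℝ≥0∞)
        = ‖ρ k x‖₊ := by
      intro k; rw [if_neg (by omega)]
      have : (2 * k + 1) / 2 = k := by omega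
      rw [this]
    calc (∑' k, (‖(if (2*k) % 2 = 0 then ψ ((2*k)/2) else ρ ((2*k)/2)) x‖₊ : ℝ≥0∞))
          + ∑' k, (‖(if (2*k+1) % 2 = 0 then ψ ((2*k+1)/2) else ρ ((2*k+1)/2)) x‖₊ : ℝ≥0∞)
        = (∑' k, (‖ψ k x‖₊ : ℝ≥0∞)) + ∑' k, (‖ρ k x‖₊ : ℝ≥0∞) := by
          rw [tsum_congr he, tsum_congr ho]
      _ ≤ DBound ψ + DBound ρ := add_le_add (tsum_nn_le_dbound ψ x) (tsum_nn_le_dbound ρ x)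

end Aux
section Theta
open Metric
variable {X : Type u'} [MetricSpace X]

/-- cutoff: 0 on `Vᶜ`, positive on `V` (when `Vᶜ` is nonempty and `V` open). -/
noncomputable def uu (V : Set X) : X → ℝ := fun x => min 1 (infDist x Vᶜ)

noncomputable def SS (V : Set X) (n : ℕ) (x : X) : ℝ := min 1 (max 0 (((n : ℝ) + 2) * uu V x - 1))

noncomputable def th (V : Set X) : ℕ → X → ℝ
  | 0 => SS V 0
  | n + 1 => fun x => SS V (n + 1) x - SS V n x

variable {V : Set X}

lemma uu_cont : Continuous (uu V) := continuous_const.min (continuous_infDist_pt _)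

lemma uu_nonneg (x : X) : 0 ≤ uu V x := le_min zero_le_one infDist_nonneg

lemma uu_zero (hx : x ∉ V) : uu V x = 0 := by
  have : infDist x Vᶜ = 0 := infDist_zero_of_mem hx
  simp [uu, this]

lemma uu_pos (hV : IsOpen V) (hVc : Vᶜ.Nonempty) (hx : x ∈ V) : 0 < uu V x :=
  lt_min one_pos ((hV.isClosed_compl.notMem_iff_infDist_pos hVc).1 (by simpa))

lemma SS_nonneg (n : ℕ) (x : X) : 0 ≤ SS V n x := le_min zero_le_one (le_max_left _ _)

lemma SS_le_one (n : ℕ) (x : X) : SS V n x ≤ 1 := min_le_left _ _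

lemma SS_mono (n : ℕ) (x : X) : SS V n x ≤ SS V (n + 1) x := by
  refine min_le_min le_rfl (max_le_max le_rfl (sub_le_sub_right ?_ _))
  have : ((n : ℝ) + 2) ≤ ((n : ℝ) + 1 + 2) := by linarith
  calc ((n : ℝ) + 2) * uu V x ≤ ((n : ℝ) + 1 + 2) * uu V x :=
        mul_le_mul_of_nonneg_right this (uu_nonneg x)
    _ = (((n + 1 : ℕ) : ℝ) + 2) * uu V x := by push_cast; ring

lemma SS_zero (n : ℕ) (x : X) (h : uu V x ≤ 1 / ((n : ℝ) + 2)) : SS V n x = 0 := by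
  have hn : (0 : ℝ) < (n : ℝ) + 2 := by positivity
  have : ((n : ℝ) + 2) * uu V x ≤ 1 := by
    calc ((n : ℝ) + 2) * uu V x ≤ ((n : ℝ) + 2) * (1 / ((n : ℝ) + 2)) :=
          mul_le_mul_of_nonneg_left h (by positivity)
      _ = 1 := by field_simp
  have h1 : max 0 (((n : ℝ) + 2) * uu V x - 1) = 0 := max_eq_left (by linarith)
  simp [SS, h1]

lemma SS_one (n : ℕ) (x : X) (h : 2 / ((n : ℝ) + 2) ≤ uu V x) : SS V n x = 1 := by
  have hn : (0 : ℝ) < (n : ℝ) + 2 := by positivity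
  have : (2 : ℝ) ≤ ((n : ℝ) + 2) * uu V x := by
    rw [div_le_iff₀ hn] at h; linarith [h]
  have h1 : (1 : ℝ) ≤ max 0 (((n : ℝ) + 2) * uu V x - 1) := le_max_of_le_right (by linarith)
  simp [SS, min_eq_left h1]

lemma th_nonneg (n : ℕ) (x : X) : 0 ≤ th V n x := by
  cases n with
  | zero => exact SS_nonneg 0 x
  | succ n => exact sub_nonneg.2 (SS_mono n x)

lemma th_zero (n : ℕ) (x : X) (h : uu V x ≤ 1 / ((n : ℝ) + 2)) : th V n x = 0 := by
  cases n with
  | zero => exact SS_zero 0 x h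
  | succ n =>
      have h2 : uu V x ≤ 1 / ((n : ℝ) + 2) := by
        refine h.trans (by
          push_cast
          rw [div_le_div_iff₀ (by positivity) (by positivity)]
          push_cast; linarith)
      show SS V (n + 1) x - SS V n x = 0
      rw [SS_zero (n+1) x (by push_cast at h ⊢; linarith [h]), SS_zero n x h2, sub_zero]

lemma sum_th (N : ℕ) (x : X) : ∑ i ∈ Finset.range (N + 1), th V i x = SS V N x := by
  induction N with
  | zero => simp [th]
  | succ N ih => rw [Finset.sum_range_succ, ih]; show SS V N x + (SS V (N+1) x - SS V N x) = _; ring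

lemma hasSum_th (hV : IsOpen V) (hVc : Vᶜ.Nonempty) (hx : x ∈ V) :
    HasSum (fun n => th V n x) 1 := by
  have hu : 0 < uu V x := uu_pos hV hVc hx
  rw [hasSum_iff_tendsto_nat_of_nonneg (fun i => th_nonneg i x)]
  have hN : ∀ N : ℕ, (⌈2 / uu V x⌉₊ : ℝ) ≤ (N : ℝ) + 2 → SS V N x = 1 := by
    intro N hNle
    refine SS_one N x ?_
    have h2 : 2 / uu V x ≤ (N : ℝ) + 2 := (Nat.le_ceil _).trans hNle
    rw [div_le_iff₀ hu] at h2
    rw [div_le_iff₀ (by positivity)]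
    linarith [h2]
  refine tendsto_atTop_of_eventually_const (i₀ := ⌈2 / uu V x⌉₊ + 1) fun N hNge => ?_
  obtain ⟨M, rfl⟩ : ∃ M, N = M + 1 := ⟨N - 1, by omega⟩
  have hle : ⌈2 / uu V x⌉₊ ≤ M + 1 := by omega
  have hle' : (⌈2 / uu V x⌉₊ : ℝ) ≤ (M : ℝ) + 2 := by
    calc (⌈2 / uu V x⌉₊ : ℝ) ≤ ((M:ℕ) : ℝ) + 1 := by exact_mod_cast hle
      _ ≤ (M : ℝ) + 2 := by linarith
  rw [sum_th, hN M hle']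

lemma th_zero_off (n : ℕ) (hx : x ∉ V) : th V n x = 0 :=
  th_zero n x (by rw [uu_zero hx]; positivity)

lemma tsum_th_le (x : X) : ∑' n, (‖th V n x‖₊ : ℝ≥0∞) ≤ 1 := by
  refine tsum_le_of_sum_range_le fun N => ?_
  have : ∀ i, (‖th V i x‖₊ : ℝ≥0∞) = ENNReal.ofReal (th V i x) := fun i =>
    Real.enorm_eq_ofReal (th_nonneg i x)
  cases N with
  | zero => simp
  | succ N =>
      calc ∑ i ∈ Finset.range (N+1), (‖th V i x‖₊ : ℝ≥0∞)
          = ∑ i ∈ Finset.range (N+1), ENNReal.ofReal (th V i x) := Finset.sum_congr rfl fun i _ => this i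
        _ = ENNReal.ofReal (∑ i ∈ Finset.range (N+1), th V i x) :=
            (ENNReal.ofReal_sum_of_nonneg fun i _ => th_nonneg i x).symm
        _ = ENNReal.ofReal (SS V N x) := by rw [sum_th]
        _ ≤ 1 := ENNReal.ofReal_le_one.2 (SS_le_one N x)


lemma SS_cont (n : ℕ) : Continuous (SS V n) :=
  continuous_const.min (continuous_const.max ((continuous_const.mul uu_cont).sub continuous_const))

lemma th_cont (n : ℕ) : Continuous (th V n) := by
  cases n with
  | zero => exact SS_cont 0
  | succ n => exact (SS_cont (n+1)).sub (SS_cont n)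

end Theta

section LemO
open Metric
variable {X : Type u'} [MetricSpace X]

lemma exists_rep_extension_open {V : Set X} (hV : IsOpen V)
    (f : V → ℂ) (φ : ℕ → V → ℂ) (hrep : IsDRep f φ) (hfin : DBound φ ≠ ⊤)
    (g : X → ℂ) (hgV : ∀ v : V, g ↑v = f v) (hg0 : ∀ x, x ∉ V → g x = 0) :
    ∃ ψ : ℕ → X → ℂ, IsDRep g ψ ∧ DBound ψ ≤ DBound φ := by
  by_cases hVu : V = Set.univ
  · subst hVu
    refine ⟨fun j x => φ j ⟨x, Set.mem_univ x⟩,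
      ⟨fun j => (hrep.1 j).comp (Continuous.subtype_mk continuous_id _), fun x => ?_⟩, ?_⟩
    · have := hgV ⟨x, Set.mem_univ x⟩
      rw [show g x = f ⟨x, Set.mem_univ x⟩ from this]
      exact hrep.2 _
    · exact iSup_le fun x => le_iSup_of_le ⟨x, Set.mem_univ x⟩ le_rfl
  have hVc : Vᶜ.Nonempty := Set.nonempty_compl.mpr hVu
  classical
  -- zero extension of each φ j
  set E : ℕ → X → ℂ := fun j x => if h : x ∈ V then φ j ⟨x, h⟩ else 0 with hE
  have hEV : ∀ j (v : V), E j ↑v = φ j v := by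
    intro j v
    simp only [hE, dif_pos v.2]
  have hE0 : ∀ j (x : X), x ∉ V → E j x = 0 := fun j x hx => by simp only [hE, dif_neg hx]
  set Ψ : ℕ × ℕ → X → ℂ := fun p x => ((th V p.1 x : ℝ) : ℂ) * E p.2 x with hΨ
  -- continuity of each Ψ p
  have contΨ : ∀ p : ℕ × ℕ, Continuous (Ψ p) := by
    rintro ⟨n, j⟩
    rw [continuous_iff_continuousAt]
    intro x
    by_cases hx : x ∈ V
    · have hcO : ContinuousOn (Ψ (n, j)) V := by
        rw [continuousOn_iff_continuous_restrict]
        have hc : Continuous fun v : V => ((th V n ↑v : ℝ) : ℂ) * φ j v :=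
          (Complex.continuous_ofReal.comp ((th_cont n).comp continuous_subtype_val)).mul (hrep.1 j)
        refine hc.congr fun v => ?_
        simp only [Set.restrict, hΨ, hEV]
        show _ = ((th V n ↑v : ℝ) : ℂ) * E j ↑v
        rw [hEV]
      exact hcO.continuousAt (hV.mem_nhds hx)
    · have hO : IsOpen {y : X | uu V y < 1 / ((n : ℝ) + 2)} :=
        isOpen_lt uu_cont continuous_const
      have hxO : x ∈ {y : X | uu V y < 1 / ((n : ℝ) + 2)} := by
        simp only [Set.mem_setOf_eq, uu_zero hx]; positivity
      have hzero : ∀ y ∈ {y : X | uu V y < 1 / ((n : ℝ) + 2)}, Ψ (n, j) y = 0 := by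
        intro y hy
        simp only [hΨ, th_zero n y (le_of_lt hy), Complex.ofReal_zero, zero_mul]
      exact ((continuousOn_const (c := (0:ℂ))).congr hzero).continuousAt (hO.mem_nhds hxO)
  -- pointwise norm-sum bound
  have boundΨ : ∀ x : X, ∑' p : ℕ × ℕ, (‖Ψ p x‖₊ : ℝ≥0∞) ≤ DBound φ := by
    intro x
    have key : ∑' p : ℕ × ℕ, (‖Ψ p x‖₊ : ℝ≥0∞)
        = (∑' n, (‖th V n x‖₊ : ℝ≥0∞)) * ∑' j, (‖E j x‖₊ : ℝ≥0∞) := by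
      calc ∑' p : ℕ × ℕ, (‖Ψ p x‖₊ : ℝ≥0∞)
          = ∑' n, ∑' j, (‖Ψ (n, j) x‖₊ : ℝ≥0∞) := ENNReal.tsum_prod (f := fun n j => (‖Ψ (n, j) x‖₊ : ℝ≥0∞))
        _ = ∑' n, ∑' j, (‖th V n x‖₊ : ℝ≥0∞) * ‖E j x‖₊ := by
            refine tsum_congr fun n => tsum_congr fun j => ?_
            simp only [hΨ, nnnorm_mul, ENNReal.coe_mul, Complex.nnnorm_real]
        _ = ∑' n, (‖th V n x‖₊ : ℝ≥0∞) * ∑' j, (‖E j x‖₊ : ℝ≥0∞) := by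
            refine tsum_congr fun n => ENNReal.tsum_mul_left
        _ = _ := ENNReal.tsum_mul_right
    rw [key]
    by_cases hx : x ∈ V
    · have hEsum : ∑' j, (‖E j x‖₊ : ℝ≥0∞) = ∑' j, (‖φ j ⟨x, hx⟩‖₊ : ℝ≥0∞) :=
        tsum_congr fun j => by rw [show E j x = φ j ⟨x, hx⟩ from by simp only [hE, dif_pos hx]]
      rw [hEsum]
      calc (∑' n, (‖th V n x‖₊ : ℝ≥0∞)) * ∑' j, (‖φ j ⟨x, hx⟩‖₊ : ℝ≥0∞)
          ≤ 1 * DBound φ :=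
            mul_le_mul' (tsum_th_le x) (tsum_nn_le_dbound φ ⟨x, hx⟩)
        _ = DBound φ := one_mul _
    · have : ∀ j, (‖E j x‖₊ : ℝ≥0∞) = 0 := fun j => by rw [hE0 j x hx]; simp
      rw [tsum_congr this]
      simp
  -- pointwise HasSum
  have hasSumΨ : ∀ x : X, HasSum (fun p : ℕ × ℕ => Ψ p x) (g x) := by
    intro x
    by_cases hx : x ∈ V
    · have hsummable : Summable fun p : ℕ × ℕ => Ψ p x := by
        have hne : ∑' p : ℕ × ℕ, (‖Ψ p x‖₊ : ℝ≥0∞) ≠ ⊤ :=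
          ne_top_of_le_ne_top hfin (boundΨ x)
        exact Summable.of_nnnorm (ENNReal.tsum_coe_ne_top_iff_summable.mp hne)
      have hinner : ∀ n : ℕ, Summable fun j => Ψ (n, j) x := fun n =>
        (hsummable.prod_factor n)
      have htsum : ∑' p : ℕ × ℕ, Ψ p x = g x := by
        have hth : HasSum (fun n => ((th V n x : ℝ) : ℂ)) 1 := by
          have := (hasSum_th hV hVc hx).map (Complex.ofRealHom : ℝ →+* ℂ).toAddMonoidHom
            Complex.continuous_ofReal
          simpa [Function.comp_def] using this
        calc ∑' p : ℕ × ℕ, Ψ p x = ∑' n, ∑' j, Ψ (n, j) x := Summable.tsum_prod' hsummable hinner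
          _ = ∑' n, ((th V n x : ℝ) : ℂ) * ∑' j, E j x := by
              refine tsum_congr fun n => ?_
              rw [← tsum_mul_left]
          _ = (∑' n, ((th V n x : ℝ) : ℂ)) * ∑' j, E j x := tsum_mul_right
          _ = 1 * f ⟨x, hx⟩ := by
              rw [hth.tsum_eq]
              congr 1
              have : ∀ j, E j x = φ j ⟨x, hx⟩ := fun j => by simp only [hE, dif_pos hx]
              rw [tsum_congr this]
              exact (hrep.2 ⟨x, hx⟩).tsum_eq
          _ = g x := by rw [one_mul, ← hgV ⟨x, hx⟩]
      exact htsum ▸ hsummable.hasSum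
    · have hzero : (fun p : ℕ × ℕ => Ψ p x) = fun _ => 0 := by
        funext p
        simp only [hΨ, hE0 p.2 x hx, mul_zero]
      rw [hzero, hg0 x hx]
      exact hasSum_zero
  -- reindex along an equiv ℕ ≃ ℕ × ℕ
  refine ⟨fun n => Ψ (Nat.pairEquiv.symm n), ⟨fun n => contΨ _, fun x => ?_⟩, ?_⟩
  · have := (Equiv.hasSum_iff (f := fun p : ℕ × ℕ => Ψ p x) (a := g x)
      Nat.pairEquiv.symm).mpr (hasSumΨ x)
    simpa [Function.comp_def] using this
  · refine iSup_le fun x => ?_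
    have heq : ∑' n, (‖Ψ (Nat.pairEquiv.symm n) x‖₊ : ℝ≥0∞) = ∑' p : ℕ × ℕ, (‖Ψ p x‖₊ : ℝ≥0∞) :=
      Nat.pairEquiv.symm.tsum_eq fun p => (‖Ψ p x‖₊ : ℝ≥0∞)
    rw [heq]
    exact boundΨ x

end LemO

section LemC
open Metric
variable {X : Type u'} [MetricSpace X]

lemma exists_rep_extension_closed {C : Set X} (hC : IsClosed C) (hCne : C.Nonempty)
    (f : C → ℂ) (φ : ℕ → C → ℂ) (hrep : IsDRep f φ) (hfin : DBound φ ≠ ⊤)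
    {ε : ℝ} (hε : 0 < ε)
    (g : X → ℂ) (hgC : ∀ c : C, g ↑c = f c) (hg0 : ∀ x, x ∉ C → g x = 0) :
    ∃ ψ : ℕ → X → ℂ, IsDRep g ψ ∧ DBound ψ ≤ 2 * DBound φ + ENNReal.ofReal (2 * ε) := by
  classical
  set M' : ℝ := (DBound φ).toReal with hM'
  have hMof : ENNReal.ofReal M' = DBound φ := ENNReal.ofReal_toReal hfin
  -- Tietze extensions
  have hTz : ∀ j : ℕ, ∃ G : C(X, ℂ), G.restrict C = ⟨φ j, hrep.1 j⟩ :=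
    fun j => ContinuousMap.exists_restrict_eq hC ⟨φ j, hrep.1 j⟩
  choose G hG using hTz
  have hGC : ∀ j (c : C), G j ↑c = φ j c := by
    intro j c
    have := DFunLike.congr_fun (hG j) c
    simpa [ContinuousMap.restrict] using this
  -- good open neighborhoods of C
  set Vs : ℕ → Set X := fun j =>
    {x | ∑ i ∈ Finset.range (j + 1), ‖G i x‖ < M' + ε} ∩ {x | infDist x C < 1 / ((j : ℝ) + 1)}
    with hVs
  have hVsOpen : ∀ j, IsOpen (Vs j) := fun j =>
    (isOpen_lt (by continuity) continuous_const).inter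
      (isOpen_lt (continuous_infDist_pt C) continuous_const)
  have hFC : ∀ (j : ℕ) (c : C), ∑ i ∈ Finset.range (j + 1), ‖G i (c : X)‖ ≤ M' := by
    intro j c
    have heq : ∀ i, ‖G i (c : X)‖ = ‖φ i c‖ := fun i => by rw [hGC i c]
    have h1 : ENNReal.ofReal (∑ i ∈ Finset.range (j + 1), ‖φ i c‖) ≤ DBound φ := by
      rw [ENNReal.ofReal_sum_of_nonneg (fun i _ => norm_nonneg _)]
      calc ∑ i ∈ Finset.range (j + 1), ENNReal.ofReal ‖φ i c‖
          = ∑ i ∈ Finset.range (j + 1), (‖φ i c‖₊ : ℝ≥0∞) :=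
            Finset.sum_congr rfl fun i _ => ofReal_norm _
        _ ≤ ∑' i, (‖φ i c‖₊ : ℝ≥0∞) := ENNReal.sum_le_tsum _
        _ ≤ DBound φ := tsum_nn_le_dbound φ c
    have h2 := ENNReal.toReal_mono hfin h1
    rw [ENNReal.toReal_ofReal (Finset.sum_nonneg fun i _ => norm_nonneg _)] at h2
    calc ∑ i ∈ Finset.range (j + 1), ‖G i (c : X)‖
        = ∑ i ∈ Finset.range (j + 1), ‖φ i c‖ := Finset.sum_congr rfl fun i _ => heq i
      _ ≤ M' := h2
  have hCVs : ∀ j, C ⊆ Vs j := by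
    intro j c hc
    constructor
    · exact lt_of_le_of_lt (hFC j ⟨c, hc⟩) (by linarith)
    · show infDist c C < _
      rw [infDist_zero_of_mem hc]
      positivity
  -- Urysohn functions
  have hUry : ∀ j, ∃ σ : C(X, ℝ), EqOn σ 0 (Vs j)ᶜ ∧ EqOn σ 1 C ∧ ∀ x, σ x ∈ Icc (0:ℝ) 1 :=
    fun j => exists_continuous_zero_one_of_isClosed (hVsOpen j).isClosed_compl hC
      (Set.disjoint_left.mpr fun x hx hxC => hx (hCVs j hxC))
  choose σ hσ0 hσ1 hσ01 using hUry
  set ψ₀ : ℕ → X → ℂ := fun j x => ((σ j x : ℝ) : ℂ) * G j x with hψ₀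
  have hψ₀cont : ∀ j, Continuous (ψ₀ j) := fun j =>
    (Complex.continuous_ofReal.comp (σ j).continuous).mul (G j).continuous
  have hψ₀C : ∀ (j : ℕ) (c : C), ψ₀ j (c : X) = φ j c := by
    intro j c
    have h1 : σ j (c : X) = 1 := by
      have := hσ1 j c.2
      simpa using this
    simp only [hψ₀, h1, Complex.ofReal_one, one_mul]
    exact hGC j c
  have hψ₀zero : ∀ (j : ℕ) (x : X), x ∉ Vs j → ψ₀ j x = 0 := by
    intro j x hx
    have h1 : σ j x = 0 := by
      have := hσ0 j hx
      simpa using this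
    simp only [hψ₀, h1, Complex.ofReal_zero, zero_mul]
  have hfar : ∀ x, x ∉ C → ∀ j : ℕ, 1 / infDist x C ≤ (j : ℝ) → ψ₀ j x = 0 := by
    intro x hx j hj
    have hd : 0 < infDist x C := (hC.notMem_iff_infDist_pos hCne).1 hx
    refine hψ₀zero j x fun hmem => ?_
    have h2 : infDist x C < 1 / ((j : ℝ) + 1) := hmem.2
    have hj0 : (0 : ℝ) < (j : ℝ) + 1 := by positivity
    rw [lt_div_iff₀ hj0] at h2
    rw [div_le_iff₀ hd] at hj
    nlinarith [hd]
  have hvanish : ∀ x, x ∉ C → ∀ j ∉ Finset.range (⌈1 / infDist x C⌉₊), ψ₀ j x = 0 := by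
    intro x hx j hj
    apply hfar x hx
    have hNj : ⌈1 / infDist x C⌉₊ ≤ j := by simpa [Finset.mem_range, not_lt] using hj
    exact (Nat.le_ceil _).trans (by exact_mod_cast hNj)
  have hsummable : ∀ x, Summable fun j => ψ₀ j x := by
    intro x
    by_cases hx : x ∈ C
    · exact (summable_of_dbound hfin ⟨x, hx⟩).congr fun j => (hψ₀C j ⟨x, hx⟩).symm
    · exact summable_of_ne_finset_zero (s := Finset.range (⌈1 / infDist x C⌉₊))
        (hvanish x hx)
  set h : X → ℂ := fun x => ∑' j, ψ₀ j x with hh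
  have hhsum : ∀ x, HasSum (fun j => ψ₀ j x) (h x) := fun x => (hsummable x).hasSum
  have hhC : ∀ c : C, h (c : X) = f c := by
    intro c
    rw [← (hrep.2 c).tsum_eq]
    exact tsum_congr fun j => hψ₀C j c
  -- pointwise ℓ¹ bound
  have hbound₀ : ∀ x, ∑' j, (‖ψ₀ j x‖₊ : ℝ≥0∞) ≤ ENNReal.ofReal (M' + ε) := by
    intro x
    by_cases hx : x ∈ C
    · calc ∑' j, (‖ψ₀ j x‖₊ : ℝ≥0∞) = ∑' j, (‖φ j ⟨x, hx⟩‖₊ : ℝ≥0∞) :=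
            tsum_congr fun j => congrArg (fun z : ℂ => (‖z‖₊ : ℝ≥0∞)) (hψ₀C j ⟨x, hx⟩)
        _ ≤ DBound φ := tsum_nn_le_dbound φ ⟨x, hx⟩
        _ = ENNReal.ofReal M' := hMof.symm
        _ ≤ ENNReal.ofReal (M' + ε) := ENNReal.ofReal_le_ofReal (by linarith)
    · rw [tsum_eq_sum (f := fun j => (‖ψ₀ j x‖₊ : ℝ≥0∞)) (s := Finset.range (⌈1 / infDist x C⌉₊))
        (fun j hj => by show (‖ψ₀ j x‖₊ : ℝ≥0∞) = 0; rw [hvanish x hx j hj]; simp)]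
      set T := (Finset.range (⌈1 / infDist x C⌉₊)).filter (fun j => ψ₀ j x ≠ 0) with hT
      have hsum_eq : ∑ j ∈ Finset.range (⌈1 / infDist x C⌉₊), (‖ψ₀ j x‖₊ : ℝ≥0∞)
          = ∑ j ∈ T, (‖ψ₀ j x‖₊ : ℝ≥0∞) := by
        refine (Finset.sum_subset (Finset.filter_subset _ _) fun j hjN hjT => ?_).symm
        have hz : ψ₀ j x = 0 := by
          by_contra hne
          exact hjT (Finset.mem_filter.mpr ⟨hjN, hne⟩)
        rw [hz]; simp
      rw [hsum_eq]
      rcases Finset.eq_empty_or_nonempty T with hTe | hTne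
      · rw [hTe]; simp
      · have hJT : T.max' hTne ∈ T := T.max'_mem hTne
        set J := T.max' hTne with hJ
        have hJV : x ∈ Vs J := by
          by_contra hxV
          exact (Finset.mem_filter.mp hJT).2 (hψ₀zero J x hxV)
        have hreal : ∑ j ∈ T, ‖ψ₀ j x‖ ≤ M' + ε := by
          have hsub : T ⊆ Finset.range (J + 1) := fun j hj =>
            Finset.mem_range.mpr (Nat.lt_succ_of_le (T.le_max' j hj))
          calc ∑ j ∈ T, ‖ψ₀ j x‖ ≤ ∑ j ∈ T, ‖G j x‖ := by
                refine Finset.sum_le_sum fun j _ => ?_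
                simp only [hψ₀]
                rw [norm_mul, Complex.norm_real]
                calc |σ j x| * ‖G j x‖ ≤ 1 * ‖G j x‖ := by
                      refine mul_le_mul_of_nonneg_right ?_ (norm_nonneg _)
                      rw [abs_le]
                      exact ⟨by linarith [(hσ01 j x).1], (hσ01 j x).2⟩
                  _ = ‖G j x‖ := one_mul _
            _ ≤ ∑ j ∈ Finset.range (J + 1), ‖G j x‖ :=
                Finset.sum_le_sum_of_subset_of_nonneg hsub fun j _ _ => norm_nonneg _
            _ ≤ M' + ε := le_of_lt hJV.1
        calc ∑ j ∈ T, (‖ψ₀ j x‖₊ : ℝ≥0∞) = ENNReal.ofReal (∑ j ∈ T, ‖ψ₀ j x‖) := by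
              rw [ENNReal.ofReal_sum_of_nonneg (fun j _ => norm_nonneg _)]
              exact Finset.sum_congr rfl fun j _ => (ofReal_norm _).symm
          _ ≤ ENNReal.ofReal (M' + ε) := ENNReal.ofReal_le_ofReal hreal
  have hψ₀b : DBound ψ₀ ≤ ENNReal.ofReal (M' + ε) := iSup_le hbound₀
  -- h is continuous off C
  have hcontOn : ContinuousOn h Cᶜ := by
    intro x hx
    have hx' : x ∉ C := hx
    have hd : 0 < infDist x C := (hC.notMem_iff_infDist_pos hCne).1 hx'
    have hball : ∀ y ∈ Metric.ball x (infDist x C / 2),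
        ∀ j ∉ Finset.range (⌈2 / infDist x C⌉₊), ψ₀ j y = 0 := by
      intro y hy j hj
      have hNj : ⌈2 / infDist x C⌉₊ ≤ j := by simpa [Finset.mem_range, not_lt] using hj
      rw [Metric.mem_ball, dist_comm] at hy
      by_cases hyC : y ∈ C
      · exfalso
        have h1 : infDist x C ≤ dist x y := infDist_le_dist_of_mem hyC
        linarith
      refine hfar y hyC j ?_
      have hyd : infDist x C / 2 ≤ infDist y C := by
        have h1 : infDist x C ≤ infDist y C + dist x y := infDist_le_infDist_add_dist
        linarith
      have hyd0 : 0 < infDist y C := lt_of_lt_of_le (by linarith) hyd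
      rw [div_le_iff₀ hyd0]
      have h2N : 2 / infDist x C ≤ (⌈2 / infDist x C⌉₊ : ℝ) := Nat.le_ceil _
      rw [div_le_iff₀ hd] at h2N
      have hNj' : ((⌈2 / infDist x C⌉₊ : ℕ) : ℝ) ≤ (j : ℝ) := by exact_mod_cast hNj
      nlinarith [hyd, hd]
    have heqOn : Set.EqOn h (fun y => ∑ j ∈ Finset.range (⌈2 / infDist x C⌉₊), ψ₀ j y)
        (Metric.ball x (infDist x C / 2)) := by
      intro y hy
      exact tsum_eq_sum (hball y hy)
    have hco : ContinuousOn (fun y => ∑ j ∈ Finset.range (⌈2 / infDist x C⌉₊), ψ₀ j y)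
        (Metric.ball x (infDist x C / 2)) :=
      (continuous_finset_sum _ fun j _ => hψ₀cont j).continuousOn
    exact ((hco.congr heqOn).continuousAt
      (Metric.ball_mem_nhds x (by positivity))).continuousWithinAt
  have hhrest : Continuous fun v : ↥(Cᶜ) => h ↑v :=
    continuousOn_iff_continuous_restrict.mp hcontOn
  -- nnnorm of h
  have hsnn : ∀ x, Summable fun j => ‖ψ₀ j x‖₊ := by
    intro x
    by_cases hx : x ∈ C
    · exact (summable_nn_of_dbound hfin ⟨x, hx⟩).congr
        fun j => congrArg (fun z : ℂ => ‖z‖₊) (hψ₀C j ⟨x, hx⟩).symm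
    · refine summable_of_ne_finset_zero (s := Finset.range (⌈1 / infDist x C⌉₊)) fun j hj => ?_
      rw [hvanish x hx j hj]; simp
  have hhnorm : ∀ x, (‖h x‖₊ : ℝ≥0∞) ≤ ENNReal.ofReal (M' + ε) := by
    intro x
    refine le_trans ?_ (hbound₀ x)
    calc (‖h x‖₊ : ℝ≥0∞) ≤ (↑(∑' j, ‖ψ₀ j x‖₊) : ℝ≥0∞) :=
          ENNReal.coe_le_coe.2 (nnnorm_tsum_le (hsnn x))
      _ = ∑' j, (‖ψ₀ j x‖₊ : ℝ≥0∞) := ENNReal.coe_tsum (hsnn x)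
  -- the function h·χ_{Cᶜ} via the open-extension lemma
  set fV : ↥(Cᶜ) → ℂ := fun v => h ↑v with hfV
  set φ' : ℕ → ↥(Cᶜ) → ℂ := fun j => if j = 0 then fV else 0 with hφ'
  have hrep' : IsDRep fV φ' := by
    constructor
    · intro j
      simp only [hφ']
      split
      · exact hhrest
      · exact continuous_const
    · intro v
      have heq : (fun j => φ' j v) = fun j => if j = 0 then fV v else 0 := by
        funext j
        simp only [hφ']
        split <;> rfl
      rw [heq]
      exact hasSum_ite_eq 0 (fV v)
  have hφ'b : DBound φ' ≤ ENNReal.ofReal (M' + ε) := by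
    refine iSup_le fun v => ?_
    have heq : (fun j => (‖φ' j v‖₊ : ℝ≥0∞)) = fun j => if j = 0 then (‖fV v‖₊ : ℝ≥0∞) else 0 := by
      funext j
      simp only [hφ']
      split <;> simp
    rw [heq, tsum_ite_eq]
    exact hhnorm ↑v
  set r : X → ℂ := fun x => if x ∈ C then 0 else h x with hr
  obtain ⟨ρ, hρrep, hρb'⟩ := exists_rep_extension_open hC.isOpen_compl fV φ' hrep'
    (ne_top_of_le_ne_top ENNReal.ofReal_ne_top hφ'b) r
    (fun v => by simp only [hr]; rw [if_neg v.2])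
    (fun x hx => by simp only [hr]; rw [if_pos (Set.not_notMem.mp hx)])
  have hρb : DBound ρ ≤ ENNReal.ofReal (M' + ε) := hρb'.trans hφ'b
  -- combine: g = h + (-r)
  have hnegrep : IsDRep (fun x => -(r x)) (fun j x => -(ρ j x)) :=
    ⟨fun j => (hρrep.1 j).neg, fun x => (hρrep.2 x).neg⟩
  have hnegb : DBound (fun j x => -(ρ j x)) ≤ ENNReal.ofReal (M' + ε) := by
    refine iSup_le fun x => ?_
    calc ∑' j, (‖-(ρ j x)‖₊ : ℝ≥0∞) = ∑' j, (‖ρ j x‖₊ : ℝ≥0∞) :=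
          tsum_congr fun j => by rw [nnnorm_neg]
      _ ≤ DBound ρ := tsum_nn_le_dbound ρ x
      _ ≤ _ := hρb
  have hgsum : ∀ x, g x = h x + -(r x) := by
    intro x
    by_cases hx : x ∈ C
    · simp only [hr, if_pos hx, neg_zero, add_zero]
      rw [hgC ⟨x, hx⟩]
      exact (hhC ⟨x, hx⟩).symm
    · simp only [hr, if_neg hx, hg0 x hx]
      ring
  obtain ⟨χ, hχrep, hχb⟩ := interleave_rep ⟨hψ₀cont, hhsum⟩ hnegrep hgsum
  refine ⟨χ, hχrep, hχb.trans ?_⟩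
  calc DBound ψ₀ + DBound (fun j x => -(ρ j x))
      ≤ ENNReal.ofReal (M' + ε) + ENNReal.ofReal (M' + ε) := add_le_add hψ₀b hnegb
    _ = (DBound φ + ENNReal.ofReal ε) + (DBound φ + ENNReal.ofReal ε) := by
        rw [ENNReal.ofReal_add ENNReal.toReal_nonneg hε.le, hMof]
    _ = 2 * DBound φ + ENNReal.ofReal (2 * ε) := by
        rw [show (2 : ℝ) * ε = ε + ε by ring, ENNReal.ofReal_add hε.le hε.le, two_mul]
        ring

end LemC

section Assemble
open Metric

variable {K : Type u'} [MetricSpace K]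

lemma dnorm_le_of_rep {f : K → ℂ} {φ : ℕ → K → ℂ} (h : IsDRep f φ) : DNorm f ≤ DBound φ :=
  iInf_le_of_le φ (iInf_le _ h)

lemma dcs_core {W : Set K} (hWne : W.Nonempty)
    {A B : Set K} (hA : IsClosed A) (hB : IsClosed B) (hWAB : W = A \ B)
    (f : W → ℂ) (φ : ℕ → W → ℂ) (hrep : IsDRep f φ) (hfin : DBound φ ≠ ⊤)
    {ε : ℝ} (hε : 0 < ε)
    (g : K → ℂ) (hgW : ∀ w : W, g ↑w = f w) (hg0 : ∀ k, k ∉ W → g k = 0) :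
    ∃ ψ : ℕ → K → ℂ, IsDRep g ψ ∧ DBound ψ ≤ 2 * DBound φ + ENNReal.ofReal (2 * ε) := by
  classical
  set U : Set K := Bᶜ with hUdef
  have hU : IsOpen U := hB.isOpen_compl
  set C : Set ↥U := Subtype.val ⁻¹' A with hCdef
  have hCc : IsClosed C := hA.preimage continuous_subtype_val
  have hmemW : ∀ c : ↥C, ((c : ↥U) : K) ∈ W := by
    intro c
    rw [hWAB]
    exact ⟨c.2, (c : ↥U).2⟩
  set m : ↥C → ↥W := fun c => ⟨((c : ↥U) : K), hmemW c⟩ with hm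
  have hmc : Continuous m :=
    Continuous.subtype_mk (continuous_subtype_val.comp continuous_subtype_val) _
  have hCne : C.Nonempty := by
    obtain ⟨w, hw⟩ := hWne
    have hw' : w ∈ A \ B := by rw [← hWAB]; exact hw
    exact ⟨⟨w, hw'.2⟩, hw'.1⟩
  set f' : ↥C → ℂ := fun c => f (m c) with hf'
  set φ' : ℕ → ↥C → ℂ := fun j c => φ j (m c) with hφ'
  have hrep' : IsDRep f' φ' := ⟨fun j => (hrep.1 j).comp hmc, fun c => hrep.2 (m c)⟩
  have hb' : DBound φ' ≤ DBound φ := iSup_le fun c => le_iSup_of_le (m c) le_rfl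
  set g' : ↥U → ℂ := fun v => if hv : v ∈ C then f' ⟨v, hv⟩ else 0 with hg'
  obtain ⟨ρ, hρrep, hρb⟩ := exists_rep_extension_closed hCc hCne f' φ' hrep'
    (ne_top_of_le_ne_top hfin hb') hε g'
    (fun c => by
      simp only [hg', dif_pos c.2])
    (fun v hv => by simp only [hg', dif_neg hv])
  have hρb' : DBound ρ ≤ 2 * DBound φ + ENNReal.ofReal (2 * ε) :=
    hρb.trans (by gcongr)
  have hρfin : DBound ρ ≠ ⊤ := by
    refine ne_top_of_le_ne_top ?_ hρb'
    exact ENNReal.add_ne_top.mpr ⟨ENNReal.mul_ne_top (by norm_num) hfin, ENNReal.ofReal_ne_top⟩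
  obtain ⟨ψ, hψrep, hψb⟩ := exists_rep_extension_open hU g' ρ hρrep hρfin g
    (fun v => by
      by_cases hv : v ∈ C
      · have h1 : (v : K) ∈ W := by
          rw [hWAB]; exact ⟨hv, v.2⟩
        have h2 := hgW ⟨(v : K), h1⟩
        simp only [hg', dif_pos hv]
        rw [h2]
      · have h1 : (v : K) ∉ W := by
          rw [hWAB]
          rintro ⟨hvA, -⟩
          exact hv hvA
        simp only [hg', dif_neg hv]
        exact hg0 _ h1)
    (fun x hx => by
      refine hg0 x ?_
      rw [hWAB]
      rintro ⟨-, hxB⟩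
      exact hxB (Set.not_notMem.mp hx))
  exact ⟨ψ, hψrep, hψb.trans hρb'⟩

end Assemble

end Stmt2Helpers

/-- for bounded `f ∈ D(W)` and `g = f·χ_W` (equal to `f` on `W`, `0` off `W`):
if `W` is a DCS then `g ∈ D(K)` with `‖g‖_{D(K)} ≤ 2‖f‖_{D(W)}`;
if `W` is open then `‖g‖_{D(K)} = ‖f‖_{D(W)}`. -/


theorem stmt2 {K : Type u} [MetricSpace K] (W : Set K) (hW : W.Nonempty)
    (f : W → ℂ) (hb : ∃ C : ℝ, ∀ w, ‖f w‖ ≤ C) (hf : MemD f)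
    (g : K → ℂ) (hgW : ∀ w : W, g w = f w) (hg0 : ∀ k, k ∉ W → g k = 0) :
    (IsDCS W → MemD g ∧ DNorm g ≤ 2 * DNorm f) ∧
    (IsOpen W → DNorm g = DNorm f) := by
  obtain ⟨φ₀, hφ₀rep, hφ₀fin⟩ := hf
  have hDf_fin : DNorm f ≠ ⊤ :=
    ne_top_of_le_ne_top hφ₀fin.ne (dnorm_le_of_rep hφ₀rep)
  have hle1 : DNorm f ≤ DNorm g := by
    refine le_iInf fun ψ => le_iInf fun hψ => ?_
    have hrep : IsDRep (fun w : W => f w) (fun j (w : W) => ψ j ↑w) := by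
      refine ⟨fun j => (hψ.1 j).comp continuous_subtype_val, fun w => ?_⟩
      have := hψ.2 ↑w
      rwa [hgW w] at this
    exact (dnorm_le_of_rep (f := fun w : W => f w) hrep).trans (restrict_dbound W ψ)
  constructor
  · rintro ⟨A, B, hA, hB, hWAB⟩
    constructor
    · obtain ⟨ψ, hψrep, hψb⟩ := dcs_core hW hA hB hWAB f φ₀ hφ₀rep hφ₀fin.ne
        (ε := 1) one_pos g hgW hg0
      refine ⟨ψ, hψrep, lt_of_le_of_lt hψb ?_⟩
      exact ENNReal.add_lt_top.mpr ⟨ENNReal.mul_lt_top (by norm_num) hφ₀fin,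
        ENNReal.ofReal_lt_top⟩
    · refine ENNReal.le_of_forall_pos_le_add fun η hη h2fin => ?_
      -- choose a representation close to the D-norm
      have hlt : DNorm f < DNorm f + (η : ℝ≥0∞) / 4 := by
        refine ENNReal.lt_add_right hDf_fin ?_
        simp [ENNReal.div_eq_zero_iff, hη.ne']
      rw [DNorm] at hlt
      rw [iInf_lt_iff] at hlt
      obtain ⟨φ, hφlt⟩ := hlt
      rw [iInf_lt_iff] at hφlt
      obtain ⟨hφrep, hφlt⟩ := hφlt
      have hφfin : DBound φ ≠ ⊤ := by
        refine ne_top_of_le_ne_top ?_ hφlt.le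
        exact ENNReal.add_ne_top.mpr ⟨hDf_fin, (ENNReal.div_lt_top ENNReal.coe_ne_top (by norm_num)).ne⟩
      obtain ⟨ψ, hψrep, hψb⟩ := dcs_core hW hA hB hWAB f φ hφrep hφfin
        (ε := (η : ℝ) / 8) (by positivity) g hgW hg0
      have hofReal : ENNReal.ofReal (2 * ((η : ℝ) / 8)) = (η : ℝ≥0∞) / 4 := by
        rw [show (2 : ℝ) * ((η : ℝ) / 8) = (η : ℝ) / 4 by ring]
        rw [ENNReal.ofReal_div_of_pos (by norm_num), ENNReal.ofReal_coe_nnreal]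
        norm_num
      calc DNorm g ≤ DBound ψ := dnorm_le_of_rep hψrep
        _ ≤ 2 * DBound φ + ENNReal.ofReal (2 * ((η : ℝ) / 8)) := hψb
        _ ≤ 2 * (DNorm f + (η : ℝ≥0∞) / 4) + (η : ℝ≥0∞) / 4 := by
            rw [hofReal]; gcongr; exact hφlt.le
        _ = 2 * DNorm f + (2 * ((η : ℝ≥0∞) / 4) + (η : ℝ≥0∞) / 4) := by ring
        _ ≤ 2 * DNorm f + η := by
            gcongr
            have h1 : 2 * ((η : ℝ≥0∞) / 4) + (η : ℝ≥0∞) / 4 = 3 * (η : ℝ≥0∞) / 4 := by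
              simp only [div_eq_mul_inv]
              ring
            have h2 : (3 : ℝ≥0∞) * (η : ℝ≥0∞) / 4 ≤ 4 * (η : ℝ≥0∞) / 4 := by
              gcongr
              norm_num
            have h3 : (4 : ℝ≥0∞) * (η : ℝ≥0∞) / 4 = (η : ℝ≥0∞) := by
              rw [mul_div_assoc]
              exact ENNReal.mul_div_cancel' (by norm_num) (by norm_num)
            rw [h1]
            exact h2.trans h3.le
  · intro hWopen
    refine le_antisymm ?_ hle1
    refine ENNReal.le_of_forall_pos_le_add fun η hη hfin' => ?_
    have hlt : DNorm f < DNorm f + (η : ℝ≥0∞) := by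
      refine ENNReal.lt_add_right hDf_fin (by exact_mod_cast hη.ne')
    rw [DNorm, iInf_lt_iff] at hlt
    obtain ⟨φ, hφlt⟩ := hlt
    rw [iInf_lt_iff] at hφlt
    obtain ⟨hφrep, hφlt⟩ := hφlt
    have hφfin : DBound φ ≠ ⊤ := by
      refine ne_top_of_le_ne_top ?_ hφlt.le
      exact ENNReal.add_ne_top.mpr ⟨hDf_fin, ENNReal.coe_ne_top⟩
    obtain ⟨ψ, hψrep, hψb⟩ := exists_rep_extension_open hWopen f φ hφrep hφfin g hgW hg0
    exact (dnorm_le_of_rep hψrep).trans (hψb.trans hφlt.le)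
end

section
/- Let K be a metric space, W a closed subset of K, λ < ∞, and (φ_j)_{j=1}^∞ a sequence of continuous complex-valued functions on W with Σ_{j=1}^∞ |φ_j(w)| ≤ λ for all w ∈ W. Then there exists a sequence (φ̃_j)_{j=1}^∞ of continuous complex-valued functions on K with φ̃_j|_W = φ_j for all j and Σ_{j=1}^∞ |φ̃_j(k)| ≤ λ for all k ∈ K. -/
open Filter Set Topology ENNReal

section Aux

open Filter

/-- Radial truncation of `z` to the closed ball of radius `max r 0`. -/
noncomputable def trunc (r : ℝ) (z : ℂ) : ℂ := (min (max r 0) ‖z‖ / ‖z‖) • z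

lemma trunc_eq_of_le {r : ℝ} {z : ℂ} (h : ‖z‖ ≤ max r 0) : trunc r z = z := by
  rcases eq_or_ne z 0 with rfl | hz
  · simp [trunc]
  · rw [trunc, min_eq_right h, div_self (norm_ne_zero_iff.mpr hz), one_smul]

lemma norm_trunc (r : ℝ) (z : ℂ) : ‖trunc r z‖ = min (max r 0) ‖z‖ := by
  rcases eq_or_ne z 0 with rfl | hz
  · simp [trunc]
  · have hz' : ‖z‖ ≠ 0 := norm_ne_zero_iff.mpr hz
    have h0 : 0 ≤ min (max r 0) ‖z‖ := le_min (le_max_right r 0) (norm_nonneg z)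
    rw [trunc, norm_smul, Real.norm_eq_abs, abs_div, abs_of_nonneg h0,
      abs_of_nonneg (norm_nonneg z), div_mul_cancel₀ _ hz']

lemma continuous_trunc : Continuous (fun p : ℝ × ℂ => trunc p.1 p.2) := by
  rw [continuous_iff_continuousAt]
  rintro ⟨r, z⟩
  rcases eq_or_ne z 0 with rfl | hz
  · have hb : ∀ p : ℝ × ℂ, ‖trunc p.1 p.2‖ ≤ ‖p.2‖ := fun p => by
      rw [norm_trunc]; exact min_le_right _ _
    have ht : Tendsto (fun p : ℝ × ℂ => trunc p.1 p.2) (𝓝 (r, (0:ℂ))) (𝓝 0) :=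
      squeeze_zero_norm hb
        (by simpa using (continuous_snd.norm).tendsto (r, (0:ℂ)))
    have h0 : trunc r (0:ℂ) = 0 := by simp [trunc]
    simpa [ContinuousAt, h0] using ht
  · have hz' : ‖z‖ ≠ 0 := norm_ne_zero_iff.mpr hz
    have h1 : ContinuousAt (fun p : ℝ × ℂ => min (max p.1 0) ‖p.2‖ / ‖p.2‖) (r, z) := by
      apply ContinuousAt.div
      · fun_prop
      · fun_prop
      · simpa using hz'
    exact h1.smul continuousAt_snd

end Aux

/-- simultaneous Tietze extension preserving the `ℓ¹`-bound `λ`. -/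
theorem stmt3 {K : Type u} [MetricSpace K] (W : Set K) (hW : IsClosed W)
    (lam : ℝ) (φ : ℕ → W → ℂ) (hcont : ∀ j, Continuous (φ j))
    (hbound : ∀ w : W, ∑' j : ℕ, (‖φ j w‖₊ : ℝ≥0∞) ≤ ENNReal.ofReal lam) :
    ∃ ψ : ℕ → K → ℂ, (∀ j, Continuous (ψ j)) ∧
      (∀ j, ∀ w : W, ψ j w = φ j w) ∧
      ∀ k : K, ∑' j : ℕ, (‖ψ j k‖₊ : ℝ≥0∞) ≤ ENNReal.ofReal lam := by
  -- Tietze extensions of each `φ j`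
  have hg : ∀ j, ∃ g : K → ℂ, Continuous g ∧ ∀ w : W, g w = φ j w := by
    intro j
    obtain ⟨g, hgr⟩ := ContinuousMap.exists_restrict_eq (Y := ℂ) hW ⟨φ j, hcont j⟩
    exact ⟨g, g.continuous, fun w => ContinuousMap.congr_fun hgr w⟩
  choose g hgc hgW using hg
  -- partial sums of the norms of the truncated functions
  set s : ℕ → K → ℝ := fun j =>
    Nat.rec (fun _ => 0) (fun j sj k => sj k + min (max (lam - sj k) 0) ‖g j k‖) j with hs
  have hs0 : ∀ k, s 0 k = 0 := fun _ => rfl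
  have hsS : ∀ j k, s (j + 1) k = s j k + min (max (lam - s j k) 0) ‖g j k‖ := fun _ _ => rfl
  set ψ : ℕ → K → ℂ := fun j k => trunc (lam - s j k) (g j k) with hψ
  have hnψ : ∀ j k, ‖ψ j k‖ = min (max (lam - s j k) 0) ‖g j k‖ := fun j k => norm_trunc _ _
  have hsψ : ∀ j k, s (j + 1) k = s j k + ‖ψ j k‖ := fun j k => by rw [hnψ]
  -- continuity
  have hsc : ∀ j, Continuous (s j) := by
    intro j
    induction j with
    | zero => exact continuous_const
    | succ j ih =>
      show Continuous fun k => s j k + min (max (lam - s j k) 0) ‖g j k‖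
      exact ih.add (((continuous_const.sub ih).max continuous_const).min (hgc j).norm)
  have hψc : ∀ j, Continuous (ψ j) :=
    fun j => continuous_trunc.comp ((continuous_const.sub (hsc j)).prodMk (hgc j))
  -- nonnegativity and upper bound on the partial sums
  have hsnn : ∀ j k, 0 ≤ s j k := by
    intro j k
    induction j with
    | zero => simp [hs0]
    | succ j ih =>
      have : (0:ℝ) ≤ min (max (lam - s j k) 0) ‖g j k‖ :=
        le_min (le_max_right _ _) (norm_nonneg _)
      rw [hsS]; linarith
  have hsle : ∀ j k, s j k ≤ max lam 0 := by
    intro j k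
    induction j with
    | zero => simp [hs0]
    | succ j ih =>
      rw [hsS]
      rcases le_total (lam - s j k) 0 with h | h
      · have h1 : min (max (lam - s j k) 0) ‖g j k‖ ≤ 0 := by
          calc min (max (lam - s j k) 0) ‖g j k‖ ≤ max (lam - s j k) 0 := min_le_left _ _
          _ = 0 := max_eq_right h
        linarith
      · have h1 : min (max (lam - s j k) 0) ‖g j k‖ ≤ lam - s j k := by
          calc min (max (lam - s j k) 0) ‖g j k‖ ≤ max (lam - s j k) 0 := min_le_left _ _
          _ = lam - s j k := max_eq_left h
        have := le_max_left lam (0:ℝ)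
        linarith
  -- s j k is the partial sum of the norms of ψ
  have hsum : ∀ j k, s j k = ∑ i ∈ Finset.range j, ‖ψ i k‖ := by
    intro j k
    induction j with
    | zero => simp [hs0]
    | succ j ih => rw [hsψ, ih, Finset.sum_range_succ]
  have hmax : ENNReal.ofReal (max lam 0) = ENNReal.ofReal lam := by
    rcases le_total lam 0 with h | h
    · rw [max_eq_right h, ENNReal.ofReal_zero, ENNReal.ofReal_of_nonpos h]
    · rw [max_eq_left h]
  -- partial sums of the norms of φ are bounded by max lam 0
  have hpart : ∀ (j : ℕ) (w : W), ∑ i ∈ Finset.range (j + 1), ‖φ i w‖ ≤ max lam 0 := by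
    intro j w
    have h1 : ENNReal.ofReal (∑ i ∈ Finset.range (j + 1), ‖φ i w‖)
        ≤ ENNReal.ofReal (max lam 0) := by
      rw [ENNReal.ofReal_sum_of_nonneg (fun i _ => norm_nonneg _), hmax]
      calc ∑ i ∈ Finset.range (j + 1), ENNReal.ofReal ‖φ i w‖
          = ∑ i ∈ Finset.range (j + 1), (‖φ i w‖₊ : ℝ≥0∞) :=
            Finset.sum_congr rfl fun i _ => ofReal_norm _
        _ ≤ ∑' i : ℕ, (‖φ i w‖₊ : ℝ≥0∞) := ENNReal.sum_le_tsum _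
        _ ≤ ENNReal.ofReal lam := hbound w
    exact (ENNReal.ofReal_le_ofReal_iff (le_max_right _ _)).mp h1
  -- on W, the truncation is inactive
  have hWs : ∀ (j : ℕ) (w : W), s j w = ∑ i ∈ Finset.range j, ‖φ i w‖ ∧ ψ j w = φ j w := by
    intro j w
    induction j with
    | zero =>
      have hsw : s 0 w = ∑ i ∈ Finset.range 0, ‖φ i w‖ := by simp [hs0]
      refine ⟨hsw, ?_⟩
      have hnn : 0 ≤ s 0 (w : K) := hsnn 0 w
      have hb : ‖g 0 w‖ ≤ max (lam - s 0 w) 0 := by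
        have h1 := hpart 0 w
        rw [Finset.sum_range_one] at h1
        rw [hgW 0 w]
        rw [hsw, Finset.sum_range_zero]
        rcases le_total lam 0 with h | h
        · have : ‖φ 0 w‖ ≤ 0 := by
            rw [max_eq_right h] at h1; linarith
          calc ‖φ 0 w‖ ≤ 0 := this
          _ ≤ max (lam - 0) 0 := le_max_right _ _
        · rw [max_eq_left h] at h1
          calc ‖φ 0 w‖ ≤ lam - 0 := by linarith
          _ ≤ max (lam - 0) 0 := le_max_left _ _
      show trunc (lam - s 0 w) (g 0 w) = φ 0 w
      rw [trunc_eq_of_le (by simpa [hsw] using hb), hgW 0 w]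
    | succ j ih =>
      obtain ⟨ihs, ihψ⟩ := ih
      have hsw : s (j + 1) w = ∑ i ∈ Finset.range (j + 1), ‖φ i w‖ := by
        rw [hsψ, ihs, ihψ, Finset.sum_range_succ]
      refine ⟨hsw, ?_⟩
      have hnn : (0:ℝ) ≤ ∑ i ∈ Finset.range (j + 1), ‖φ i w‖ :=
        Finset.sum_nonneg fun i _ => norm_nonneg _
      have h1 := hpart (j + 1) w
      rw [Finset.sum_range_succ] at h1
      have hb : ‖g (j + 1) w‖ ≤ max (lam - s (j + 1) w) 0 := by
        rw [hgW (j + 1) w, hsw]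
        rcases le_total lam 0 with h | h
        · have : ‖φ (j + 1) w‖ ≤ 0 := by
            rw [max_eq_right h] at h1; linarith
          calc ‖φ (j + 1) w‖ ≤ 0 := this
          _ ≤ max _ 0 := le_max_right _ _
        · rw [max_eq_left h] at h1
          calc ‖φ (j + 1) w‖ ≤ lam - ∑ i ∈ Finset.range (j + 1), ‖φ i w‖ := by linarith
          _ ≤ max _ 0 := le_max_left _ _
      show trunc (lam - s (j + 1) w) (g (j + 1) w) = φ (j + 1) w
      rw [trunc_eq_of_le hb, hgW (j + 1) w]
  refine ⟨ψ, hψc, fun j w => (hWs j w).2, fun k => ?_⟩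
  rw [← hmax, ENNReal.tsum_eq_iSup_sum' (fun n => Finset.range n)
    (fun F => (Finset.exists_nat_subset_range F).imp fun n hn => hn)]
  refine iSup_le fun n => ?_
  calc ∑ i ∈ Finset.range n, (‖ψ i k‖₊ : ℝ≥0∞)
      = ENNReal.ofReal (∑ i ∈ Finset.range n, ‖ψ i k‖) := by
        rw [ENNReal.ofReal_sum_of_nonneg (fun i _ => norm_nonneg _)]
        exact Finset.sum_congr rfl fun i _ => (ofReal_norm _).symm
    _ ≤ ENNReal.ofReal (max lam 0) := by
        apply ENNReal.ofReal_le_ofReal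
        rw [← hsum]
        exact hsle n k
end

section
/- Let K be a metric space, f : K → ℂ a bounded function, n a positive integer, and δ_1, …, δ_n positive real numbers such that os_n(f,(δ_i)) ≠ ∅. Then if f ∈ D(K), one has ‖f‖_D ≥ Σ_{i=1}^n δ_i + sup{|f(x)| : x ∈ os_n(f,(δ_i))}. -/
open Filter Set Topology ENNReal

noncomputable section StmtFourAux
set_option linter.unusedSectionVars false
universe w
variable {K : Type w} [MetricSpace K]

def headS (φ : ℕ → K → ℂ) (m : ℕ) (k : K) : ℝ≥0∞ := ∑ j ∈ Finset.range m, (‖φ j k‖₊ : ℝ≥0∞)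
def tailS (φ : ℕ → K → ℂ) (m : ℕ) (k : K) : ℝ≥0∞ := ∑' j : ℕ, (‖φ (j + m) k‖₊ : ℝ≥0∞)

lemma head_ne_top (φ : ℕ → K → ℂ) (m : ℕ) (k : K) : headS φ m k ≠ ⊤ :=
  (ENNReal.sum_lt_top.mpr (fun j _ => ENNReal.coe_lt_top)).ne

lemma head_add_tail (φ : ℕ → K → ℂ) (m : ℕ) (k : K) :
    headS φ m k + tailS φ m k = ∑' j : ℕ, (‖φ j k‖₊ : ℝ≥0∞) :=
  Summable.sum_add_tsum_nat_add' (f := fun j => (‖φ j k‖₊ : ℝ≥0∞)) (k := m) ENNReal.summable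

lemma head_mono (φ : ℕ → K → ℂ) {m m' : ℕ} (h : m ≤ m') (k : K) :
    headS φ m k ≤ headS φ m' k :=
  Finset.sum_le_sum_of_subset (Finset.range_subset_range.mpr h)

lemma tail_anti (φ : ℕ → K → ℂ) {m m' : ℕ} (h : m ≤ m') (k : K) :
    tailS φ m' k ≤ tailS φ m k := by
  rw [← ENNReal.add_le_add_iff_left (head_ne_top φ m' k), head_add_tail,
    ← head_add_tail φ m k]
  exact add_le_add_left (head_mono φ h k) _

lemma total_le_DBound (φ : ℕ → K → ℂ) (k : K) :
    (∑' j : ℕ, (‖φ j k‖₊ : ℝ≥0∞)) ≤ DBound φ := by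
  rw [DBound]; exact le_iSup (fun k : K => ∑' j : ℕ, (‖φ j k‖₊ : ℝ≥0∞)) k

lemma tail_tendsto (φ : ℕ → K → ℂ) (k : K) (h : (∑' j : ℕ, (‖φ j k‖₊ : ℝ≥0∞)) ≠ ⊤) :
    Tendsto (fun m => tailS φ m k) atTop (𝓝 0) :=
  ENNReal.tendsto_sum_nat_add _ h

lemma norm_sub_partial_le {f : K → ℂ} {φ : ℕ → K → ℂ} (hrep : IsDRep f φ) (m : ℕ) (k : K)
    (h : (∑' j : ℕ, (‖φ j k‖₊ : ℝ≥0∞)) ≠ ⊤) :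
    (‖f k - ∑ j ∈ Finset.range m, φ j k‖₊ : ℝ≥0∞) ≤ tailS φ m k := by
  have htail : tailS φ m k ≠ ⊤ :=
    ne_top_of_le_ne_top h (le_trans le_add_self (head_add_tail φ m k).le)
  have hsummable : Summable fun j => ‖φ (j + m) k‖₊ := by
    rw [← ENNReal.tsum_coe_ne_top_iff_summable]; exact htail
  have h2 : HasSum (fun j => φ (j + m) k) (f k - ∑ j ∈ Finset.range m, φ j k) :=
    (hasSum_nat_add_iff' m).mpr (hrep.2 k)
  have h3 : ‖f k - ∑ j ∈ Finset.range m, φ j k‖₊ ≤ ∑' j, ‖φ (j + m) k‖₊ := by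
    rw [← h2.tsum_eq]
    exact nnnorm_tsum_le hsummable
  calc (‖f k - ∑ j ∈ Finset.range m, φ j k‖₊ : ℝ≥0∞)
      ≤ (↑(∑' j, ‖φ (j + m) k‖₊) : ℝ≥0∞) := ENNReal.coe_le_coe.mpr h3
    _ = tailS φ m k := ENNReal.coe_tsum hsummable

lemma norm_le_head_add_tail {f : K → ℂ} {φ : ℕ → K → ℂ} (hrep : IsDRep f φ) (m : ℕ) (k : K)
    (h : (∑' j : ℕ, (‖φ j k‖₊ : ℝ≥0∞)) ≠ ⊤) :
    (‖f k‖₊ : ℝ≥0∞) ≤ headS φ m k + tailS φ m k := by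
  have h1 : (‖f k‖₊ : ℝ≥0∞) ≤ (‖∑ j ∈ Finset.range m, φ j k‖₊ : ℝ≥0∞)
      + (‖f k - ∑ j ∈ Finset.range m, φ j k‖₊ : ℝ≥0∞) := by
    rw [← ENNReal.coe_add]
    exact ENNReal.coe_le_coe.mpr (by
      simpa using nnnorm_add_le (∑ j ∈ Finset.range m, φ j k) (f k - ∑ j ∈ Finset.range m, φ j k))
  refine h1.trans (add_le_add ?_ (norm_sub_partial_le hrep m k h))
  calc (‖∑ j ∈ Finset.range m, φ j k‖₊ : ℝ≥0∞)
      ≤ (↑(∑ j ∈ Finset.range m, ‖φ j k‖₊) : ℝ≥0∞) :=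
        ENNReal.coe_le_coe.mpr (nnnorm_sum_le _ _)
    _ = headS φ m k := by rw [headS, ENNReal.coe_finset_sum]

lemma head_continuous {φ : ℕ → K → ℂ} (hc : ∀ j, Continuous (φ j)) (m : ℕ) :
    Continuous (headS φ m) := by
  unfold headS
  exact continuous_finset_sum _ fun j _ => ENNReal.continuous_coe.comp ((hc j).nnnorm)

-- sup extraction helpers
lemma helper1 {ι : Type*} (s : Set ι) (g : ι → ℝ≥0∞) {δ η : ℝ≥0∞}
    (hδ0 : 0 < δ) (hδt : δ ≠ ⊤) (hη : 0 < η) (h : δ ≤ ⨆ y ∈ s, g y) :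
    ∃ y ∈ s, δ ≤ g y + η := by
  rcases le_or_gt δ η with hle | hlt
  · have h0 : (0 : ℝ≥0∞) < ⨆ y ∈ s, g y := lt_of_lt_of_le hδ0 h
    rw [lt_iSup_iff] at h0
    obtain ⟨y, hy⟩ := h0
    rw [lt_iSup_iff] at hy
    obtain ⟨hys, _⟩ := hy
    exact ⟨y, hys, hle.trans le_add_self⟩
  · have h2 : δ - η < ⨆ y ∈ s, g y :=
      lt_of_lt_of_le (ENNReal.sub_lt_self hδt hδ0.ne' hη.ne') h
    rw [lt_iSup_iff] at h2
    obtain ⟨y, hy⟩ := h2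
    rw [lt_iSup_iff] at hy
    obtain ⟨hys, hy⟩ := hy
    exact ⟨y, hys, tsub_le_iff_right.mp hy.le⟩

lemma helper2 {ι : Type*} (s : Set ι) (g : ι → ℝ≥0∞) {δ η : ℝ≥0∞}
    (hδt : δ ≠ ⊤) (hη : 0 < η) (hne : s.Nonempty)
    (h : δ ≤ (⨆ y ∈ s, g y) + η) :
    ∃ y ∈ s, δ ≤ g y + η + η := by
  rcases le_or_gt δ (η + η) with hle | hlt
  · obtain ⟨y, hy⟩ := hne
    exact ⟨y, hy, hle.trans (by rw [add_assoc]; exact le_add_self)⟩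
  · have hηδ : η < δ := lt_of_le_of_lt le_add_self hlt
    have h1 : (0 : ℝ≥0∞) < δ - η := tsub_pos_iff_lt.mpr hηδ
    have h2 : δ - η ≠ ⊤ := ne_top_of_le_ne_top hδt tsub_le_self
    have h3 : δ - η ≤ ⨆ y ∈ s, g y := tsub_le_iff_right.mpr h
    obtain ⟨y, hys, hy⟩ := helper1 s g h1 h2 hη h3
    exact ⟨y, hys, by
      have := tsub_le_iff_right.mp hy
      calc δ ≤ g y + η + η := by exact this
      ⟩

lemma key_step {f : K → ℂ} {φ : ℕ → K → ℂ} (hrep : IsDRep f φ) (hfin : DBound φ ≠ ⊤)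
    (L : Set K) (x : K) {δ : ℝ≥0∞} (hδ0 : 0 < δ) (hδt : δ ≠ ⊤)
    (hx : δ ≤ oscWithin f L x) (m : ℕ) {ε : ℝ≥0∞} (hε : 0 < ε)
    (U : Set K) (hU : IsOpen U) (hxU : x ∈ U) :
    ∃ w ∈ U ∩ L, δ ≤ tailS φ m w + ε := by
  set η := ε / 4 with hηdef
  have hη0 : 0 < η := ENNReal.div_pos hε.ne' (by norm_num)
  have htot : ∀ k : K, (∑' j : ℕ, (‖φ j k‖₊ : ℝ≥0∞)) ≠ ⊤ :=
    fun k => ne_top_of_le_ne_top hfin (total_le_DBound φ k)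
  -- step 1 : pick y
  have h1 : δ ≤ ⨆ y ∈ U ∩ L, toscSuccWithin f L (oscNWithin f L 0) y := by
    refine hx.trans ?_
    rw [oscWithin]
    show uscEnvWithin L (toscSuccWithin f L (oscNWithin f L 0)) x ≤ _
    rw [uscEnvWithin]
    exact biInf_le _ (hU.mem_nhds hxU)
  obtain ⟨y, ⟨hyU, hyL⟩, hy⟩ :=
    helper1 (U ∩ L) (toscSuccWithin f L (oscNWithin f L 0)) hδ0 hδt hη0 h1
  -- step 2 : choose m' ≥ m with small tail at y
  have hev : ∀ᶠ m' in atTop, tailS φ m' y < η :=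
    (tail_tendsto φ y (htot y)).eventually_lt_const hη0
  obtain ⟨m', hm'ge, hm'tail⟩ := ((eventually_ge_atTop m).and hev).exists
  -- step 3 : neighborhood of y
  set F := fun k => ∑ j ∈ Finset.range m', φ j k with hFdef
  have hFc : Continuous F := continuous_finset_sum _ fun j _ => hrep.1 j
  set V : Set K := {z | (‖F z - F y‖₊ : ℝ≥0∞) < η} ∩ U with hVdef
  have hVnhds : V ∈ 𝓝 y := by
    refine inter_mem ?_ (hU.mem_nhds hyU)
    have hc : ContinuousAt (fun z => (‖F z - F y‖₊ : ℝ≥0∞)) y :=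
      (ENNReal.continuous_coe.comp ((hFc.sub continuous_const).nnnorm)).continuousAt
    have := hc.preimage_mem_nhds (show Iio η ∈ 𝓝 ((fun z => (‖F z - F y‖₊ : ℝ≥0∞)) y) by
      simp only [sub_self, nnnorm_zero, ENNReal.coe_zero]
      exact Iio_mem_nhds hη0)
    exact this
  -- step 4 : pick z
  have h2 : toscSuccWithin f L (oscNWithin f L 0) y
      ≤ ⨆ z ∈ V ∩ L, ((‖f z - f y‖₊ : ℝ≥0∞) + oscNWithin f L 0 z) := by
    rw [toscSuccWithin]
    exact biInf_le _ hVnhds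
  have h3 : δ ≤ (⨆ z ∈ V ∩ L, ((‖f z - f y‖₊ : ℝ≥0∞) + oscNWithin f L 0 z)) + η :=
    hy.trans (add_le_add_left h2 η)
  have hVne : (V ∩ L).Nonempty :=
    ⟨y, ⟨⟨by simp [hη0], hyU⟩, hyL⟩⟩
  obtain ⟨z, ⟨⟨hzV, hzU⟩, hzL⟩, hz⟩ := helper2 (V ∩ L) _ hδt hη0 hVne h3
  -- step 5 : bound ‖f z - f y‖
  have hbig : (‖f z - f y‖₊ : ℝ≥0∞) ≤ tailS φ m' z + η + η := by
    have e : f z - f y = (f z - F z) + (F z - F y) + (F y - f y) := by ring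
    have t1 : (‖f z - f y‖₊ : ℝ≥0∞)
        ≤ (‖f z - F z‖₊ : ℝ≥0∞) + (‖F z - F y‖₊ : ℝ≥0∞) + (‖F y - f y‖₊ : ℝ≥0∞) := by
      rw [e, ← ENNReal.coe_add, ← ENNReal.coe_add]
      exact_mod_cast (nnnorm_add_le _ _).trans (add_le_add_left (nnnorm_add_le _ _) _)
    refine t1.trans (add_le_add (add_le_add ?_ hzV.le) ?_)
    · exact norm_sub_partial_le hrep m' z (htot z)
    · rw [← nnnorm_neg]
      simp only [neg_sub]
      exact (norm_sub_partial_le hrep m' y (htot y)).trans hm'tail.le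
  -- conclude
  refine ⟨z, ⟨hzU, hzL⟩, ?_⟩
  have hz' : δ ≤ (‖f z - f y‖₊ : ℝ≥0∞) + η + η := by
    simpa [oscNWithin] using hz
  have h4 : δ ≤ tailS φ m' z + (η + η + η + η) := by
    calc δ ≤ (‖f z - f y‖₊ : ℝ≥0∞) + η + η := hz'
      _ ≤ tailS φ m' z + η + η + η + η := by
          exact add_le_add_left (add_le_add_left hbig η) η
      _ = tailS φ m' z + (η + η + η + η) := by ring
  refine h4.trans (add_le_add (tail_anti φ hm'ge z) ?_)
  calc η + η + η + η = 4 * (ε / 4) := by rw [hηdef]; ring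
    _ ≤ ε := ENNReal.mul_div_le

lemma chain {f : K → ℂ} {φ : ℕ → K → ℂ} (hrep : IsDRep f φ) (hfin : DBound φ ≠ ⊤)
    {n : ℕ} {δ : ℕ → ℝ} (hδ : ∀ i < n, 0 < δ i) :
    ∀ t, t ≤ n → ∀ x ∈ osSets f δ t, ∀ m : ℕ, ∀ ε : ℝ≥0∞, 0 < ε →
      ∃ w : K, headS φ m x + ENNReal.ofReal (∑ i ∈ Finset.range t, δ i)
        ≤ (∑' j : ℕ, (‖φ j w‖₊ : ℝ≥0∞)) + ε := by
  intro t
  induction t with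
  | zero =>
    intro _ x _ m ε hε
    refine ⟨x, ?_⟩
    simp only [Finset.range_zero, Finset.sum_empty, ENNReal.ofReal_zero, add_zero]
    exact le_trans (ENNReal.sum_le_tsum _) le_self_add
  | succ t ih =>
    intro htn x hx m ε hε
    rw [osSets] at hx
    obtain ⟨hx1, hx2⟩ := hx
    set ε' := ε / 4 with hε'def
    have hε'0 : 0 < ε' := ENNReal.div_pos hε.ne' (by norm_num)
    have htot : ∀ k : K, (∑' j : ℕ, (‖φ j k‖₊ : ℝ≥0∞)) ≠ ⊤ :=
      fun k => ne_top_of_le_ne_top hfin (total_le_DBound φ k)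
    set U : Set K := {y | headS φ m x < headS φ m y + ε'} with hUdef
    have hUopen : IsOpen U := by
      have hc : Continuous fun y => headS φ m y + ε' :=
        (head_continuous hrep.1 m).add continuous_const
      exact isOpen_Ioi.preimage hc
    have hxU : x ∈ U := ENNReal.lt_add_right (head_ne_top φ m x) hε'0.ne'
    have hδt0 : 0 < ENNReal.ofReal (δ t) :=
      ENNReal.ofReal_pos.mpr (hδ t (lt_of_lt_of_le (Nat.lt_succ_self t) htn))
    obtain ⟨w₁, ⟨hw₁U, hw₁L⟩, hw₁⟩ :=
      key_step hrep hfin (osSets f δ t) x hδt0 ENNReal.ofReal_ne_top hx2 m hε'0 U hUopen hxU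
    have hev : ∀ᶠ m' in atTop, tailS φ m' w₁ < ε' :=
      (tail_tendsto φ w₁ (htot w₁)).eventually_lt_const hε'0
    obtain ⟨m', hm'ge, hm'tail⟩ := ((eventually_ge_atTop m).and hev).exists
    have e1 : headS φ m w₁ + tailS φ m w₁ = headS φ m' w₁ + tailS φ m' w₁ := by
      rw [head_add_tail, head_add_tail]
    have key : headS φ m x + ENNReal.ofReal (δ t) ≤ headS φ m' w₁ + (ε' + ε' + ε') := by
      calc headS φ m x + ENNReal.ofReal (δ t)
          ≤ (headS φ m w₁ + ε') + (tailS φ m w₁ + ε') := add_le_add (le_of_lt hw₁U) hw₁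
        _ = (headS φ m w₁ + tailS φ m w₁) + (ε' + ε') := by ring
        _ = (headS φ m' w₁ + tailS φ m' w₁) + (ε' + ε') := by rw [e1]
        _ ≤ (headS φ m' w₁ + ε') + (ε' + ε') := by
            exact add_le_add_left (add_le_add_right hm'tail.le _) _
        _ = headS φ m' w₁ + (ε' + ε' + ε') := by ring
    obtain ⟨w, hw⟩ := ih (le_of_lt (Nat.lt_of_succ_le htn)) w₁ hw₁L m' ε' hε'0
    refine ⟨w, ?_⟩
    have sumsplit : ENNReal.ofReal (∑ i ∈ Finset.range (t + 1), δ i)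
        = ENNReal.ofReal (∑ i ∈ Finset.range t, δ i) + ENNReal.ofReal (δ t) := by
      rw [Finset.sum_range_succ, ENNReal.ofReal_add ?_ (le_of_lt (hδ t (lt_of_lt_of_le (Nat.lt_succ_self t) htn)))]
      exact Finset.sum_nonneg fun i hi =>
        le_of_lt (hδ i (lt_of_lt_of_le (Finset.mem_range.mp hi) (le_of_lt (Nat.lt_of_succ_le htn))))
    calc headS φ m x + ENNReal.ofReal (∑ i ∈ Finset.range (t + 1), δ i)
        = (headS φ m x + ENNReal.ofReal (δ t)) + ENNReal.ofReal (∑ i ∈ Finset.range t, δ i) := by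
          rw [sumsplit]; ring
      _ ≤ (headS φ m' w₁ + (ε' + ε' + ε')) + ENNReal.ofReal (∑ i ∈ Finset.range t, δ i) :=
          add_le_add_left key _
      _ = (headS φ m' w₁ + ENNReal.ofReal (∑ i ∈ Finset.range t, δ i)) + (ε' + ε' + ε') := by ring
      _ ≤ ((∑' j : ℕ, (‖φ j w‖₊ : ℝ≥0∞)) + ε') + (ε' + ε' + ε') := add_le_add_left hw _
      _ = (∑' j : ℕ, (‖φ j w‖₊ : ℝ≥0∞)) + (ε' + ε' + ε' + ε') := by ring
      _ ≤ (∑' j : ℕ, (‖φ j w‖₊ : ℝ≥0∞)) + ε := by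
          refine add_le_add_right ?_ _
          calc ε' + ε' + ε' + ε' = 4 * (ε / 4) := by rw [hε'def]; ring
            _ ≤ ε := ENNReal.mul_div_le

end StmtFourAux

/-- if `os_n(f,(δ_i)) ≠ ∅` then
`‖f‖_D ≥ Σ_{i=1}^n δ_i + sup {|f(x)| : x ∈ os_n(f,(δ_i))}`. -/
theorem stmt4 {K : Type u} [MetricSpace K] (f : K → ℂ)
    (hb : ∃ C : ℝ, ∀ k, ‖f k‖ ≤ C) (n : ℕ) (hn : 0 < n)
    (δ : ℕ → ℝ) (hδ : ∀ i < n, 0 < δ i)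
    (hne : (osSets f δ n).Nonempty) (hf : MemD f) :
    ENNReal.ofReal (∑ i ∈ Finset.range n, δ i) +
      (⨆ x ∈ osSets f δ n, (‖f x‖₊ : ℝ≥0∞)) ≤ DNorm f := by
  rw [DNorm]
  refine le_iInf fun ψ => le_iInf fun hrep => ?_
  by_cases hfin : DBound ψ = ⊤
  · rw [hfin]; exact le_top
  have htot : ∀ k : K, (∑' j : ℕ, (‖ψ j k‖₊ : ℝ≥0∞)) ≠ ⊤ :=
    fun k => ne_top_of_le_ne_top hfin (total_le_DBound ψ k)
  have main : ∀ x ∈ osSets f δ n,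
      ENNReal.ofReal (∑ i ∈ Finset.range n, δ i) + (‖f x‖₊ : ℝ≥0∞) ≤ DBound ψ := by
    intro x hx
    refine ENNReal.le_of_forall_pos_le_add fun ε hε hlt => ?_
    set ε₂ := (ε : ℝ≥0∞) / 2 with hε₂def
    have hε₂0 : 0 < ε₂ := ENNReal.div_pos (by exact_mod_cast hε.ne') (by norm_num)
    have hev : ∀ᶠ m in Filter.atTop, tailS ψ m x < ε₂ :=
      (tail_tendsto ψ x (htot x)).eventually_lt_const hε₂0
    obtain ⟨m, hm⟩ := hev.exists
    have h1 : (‖f x‖₊ : ℝ≥0∞) ≤ headS ψ m x + ε₂ :=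
      (norm_le_head_add_tail hrep m x (htot x)).trans (add_le_add_right hm.le _)
    obtain ⟨w, hw⟩ := chain hrep hfin hδ n le_rfl x hx m ε₂ hε₂0
    calc ENNReal.ofReal (∑ i ∈ Finset.range n, δ i) + (‖f x‖₊ : ℝ≥0∞)
        ≤ ENNReal.ofReal (∑ i ∈ Finset.range n, δ i) + (headS ψ m x + ε₂) :=
          add_le_add_right h1 _
      _ = (headS ψ m x + ENNReal.ofReal (∑ i ∈ Finset.range n, δ i)) + ε₂ := by ring
      _ ≤ ((∑' j : ℕ, (‖ψ j w‖₊ : ℝ≥0∞)) + ε₂) + ε₂ := add_le_add_left hw _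
      _ ≤ DBound ψ + (ε₂ + ε₂) := by
          rw [add_assoc]; exact add_le_add_left (total_le_DBound ψ w) _
      _ = DBound ψ + ε := by rw [hε₂def, ENNReal.add_halves]
  rw [ENNReal.add_biSup hne]
  exact iSup₂_le main
end

section
/- Let K be a metric space, λ > 0, and f : K → ℂ a bounded function. (a) If for every x ∈ K there is an open neighborhood U_x of x such that f|_{U_x} ∈ D(U_x) and ‖f|_{U_x}‖_{D(U_x)} ≤ λ, then f ∈ D(K) and ‖f‖_{D(K)} ≤ λ. (b) If for every x ∈ K there is an open neighborhood U_x of x such that f|_{U_x} ∈ D(U_x) and ‖f|_{U_x}‖_{qD(U_x)} ≤ λ, then ‖f‖_{qD(K)} ≤ λ. -/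
open Filter Set Topology ENNReal

set_option linter.unusedSectionVars false
set_option linter.unusedVariables false

noncomputable section AuxStmt7
universe w
variable {K : Type w} [MetricSpace K]

namespace Stmt7
open scoped Classical

def rad (n : ℕ) : ℝ := (1/2 : ℝ) ^ n

lemma rad_pos (n : ℕ) : 0 < rad n := by rw [rad]; positivity

lemma rad_summable : Summable rad := summable_geometric_two

def cIdx (U : K → Set K) (x : K) : K :=
  if h : ({a | x ∈ U a}).Nonempty then
    (IsWellFounded.wf (r := WellOrderingRel (α := K))).min {a | x ∈ U a} h
  else x

lemma cIdx_mem {U : K → Set K} (hUm : ∀ x, x ∈ U x) (x : K) : x ∈ U (cIdx U x) := by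
  have h : ({a | x ∈ U a}).Nonempty := ⟨x, hUm x⟩
  rw [cIdx, dif_pos h]
  exact (IsWellFounded.wf).min_mem _ h

lemma cIdx_min {U : K → Set K} (hUm : ∀ x, x ∈ U x) {x a : K} (ha : x ∈ U a) :
    ¬ WellOrderingRel a (cIdx U x) := by
  have h : ({a | x ∈ U a}).Nonempty := ⟨x, hUm x⟩
  rw [cIdx, dif_pos h]
  exact (IsWellFounded.wf).not_lt_min {a | x ∈ U a} ha

def Tset (U : K → Set K) : ℕ → Set K
  | n => ⋃ (x : K) (_ : (∀ m, m < n → x ∉ Tset U m) ∧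
      Metric.ball x (3 * rad n) ⊆ U (cIdx U x)), Metric.ball x (rad n)

/-- `x` is a "center" at stage `n`. -/
def isCtr (U : K → Set K) (n : ℕ) (x : K) : Prop :=
  (∀ m, m < n → x ∉ Tset U m) ∧ Metric.ball x (3 * rad n) ⊆ U (cIdx U x)

lemma Tset_eq (U : K → Set K) (n : ℕ) :
    Tset U n = ⋃ (x : K) (_ : isCtr U n x), Metric.ball x (rad n) := by
  rw [Tset]; rfl

lemma Tset_open (U : K → Set K) (n : ℕ) : IsOpen (Tset U n) := by
  rw [Tset_eq]
  exact isOpen_iUnion fun x => isOpen_iUnion fun _ => Metric.isOpen_ball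

lemma mem_Tset_iff {U : K → Set K} {n : ℕ} {k : K} :
    k ∈ Tset U n ↔ ∃ x, isCtr U n x ∧ k ∈ Metric.ball x (rad n) := by
  rw [Tset_eq]; simp [mem_iUnion]

lemma sep_aux {U : K → Set K} (hUm : ∀ x, x ∈ U x) {n : ℕ} {x x' y z : K}
    (hx : isCtr U n x) (hx' : isCtr U n x')
    (hlt : WellOrderingRel (cIdx U x) (cIdx U x'))
    (hy : dist y x < rad n) (hz : dist z x' < rad n) : rad n < dist y z := by
  have hx'U : x' ∉ U (cIdx U x) := fun hmem => cIdx_min hUm hmem hlt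
  have hd : 3 * rad n ≤ dist x' x := by
    by_contra hcon
    rw [not_le] at hcon
    exact hx'U (hx.2 (Metric.mem_ball.2 hcon))
  have h1 := dist_triangle x' z y
  have h2 := dist_triangle z y x
  have := dist_comm y x
  have := dist_comm z x'
  have := dist_comm y z
  have := dist_triangle x' y x
  nlinarith [dist_triangle x' z x, dist_comm z y]

lemma sep {U : K → Set K} (hUm : ∀ x, x ∈ U x) {n : ℕ} {x x' y z : K}
    (hx : isCtr U n x) (hx' : isCtr U n x')
    (hy : dist y x < rad n) (hz : dist z x' < rad n) (hyz : dist y z ≤ rad n) :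
    cIdx U x = cIdx U x' := by
  rcases trichotomous_of WellOrderingRel (cIdx U x) (cIdx U x') with h | h | h
  · exact absurd hyz (not_le.2 (sep_aux hUm hx hx' h hy hz))
  · exact h
  · have := sep_aux hUm hx' hx h hz hy
    rw [dist_comm] at hyz
    exact absurd hyz (not_le.2 this)

lemma cover {U : K → Set K} (hUo : ∀ x, IsOpen (U x)) (hUm : ∀ x, x ∈ U x) (y : K) :
    ∃ n, y ∈ Tset U n := by
  obtain ⟨ε, hε, hball⟩ := Metric.isOpen_iff.1 (hUo (cIdx U y)) y (cIdx_mem hUm y)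
  obtain ⟨n, hn⟩ : ∃ n : ℕ, (1/2 : ℝ) ^ n < ε / 3 :=
    exists_pow_lt_of_lt_one (by linarith) (by norm_num)
  by_cases hm : ∃ m, m < n ∧ y ∈ Tset U m
  · exact ⟨hm.choose, hm.choose_spec.2⟩
  · push_neg at hm
    refine ⟨n, mem_Tset_iff.2 ⟨y, ⟨hm, ?_⟩, Metric.mem_ball_self (rad_pos n)⟩⟩
    refine fun z hz => hball ?_
    rw [Metric.mem_ball] at hz ⊢
    have : rad n < ε / 3 := hn
    calc dist z y < 3 * rad n := hz
      _ < ε := by rw [rad] at this ⊢; linarith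

def center (U : K → Set K) (n : ℕ) (k : K) : K :=
  if h : ∃ x, isCtr U n x ∧ k ∈ Metric.ball x (rad n) then h.choose else k

lemma center_spec {U : K → Set K} {n : ℕ} {k : K} (hk : k ∈ Tset U n) :
    isCtr U n (center U n k) ∧ k ∈ Metric.ball (center U n k) (rad n) := by
  have h := mem_Tset_iff.1 hk
  rw [center, dif_pos h]
  exact h.choose_spec

def pIdx (U : K → Set K) (n : ℕ) (k : K) : K := cIdx U (center U n k)

lemma pIdx_mem {U : K → Set K} (hUm : ∀ x, x ∈ U x) {n : ℕ} {k : K} (hk : k ∈ Tset U n) :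
    k ∈ U (pIdx U n k) := by
  obtain ⟨hc, hb⟩ := center_spec hk
  exact hc.2 (Metric.ball_subset_ball (by nlinarith [rad_pos n]) hb)

lemma pIdx_loc {U : K → Set K} (hUm : ∀ x, x ∈ U x) {n : ℕ} {k k' : K}
    (hk : k ∈ Tset U n) (hk' : k' ∈ Tset U n) (hd : dist k k' ≤ rad n) :
    pIdx U n k = pIdx U n k' := by
  obtain ⟨hc, hb⟩ := center_spec hk
  obtain ⟨hc', hb'⟩ := center_spec hk'
  exact sep hUm hc hc' (Metric.mem_ball.1 hb) (Metric.mem_ball.1 hb') hd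


def tau (U : K → Set K) (n : ℕ) (x : K) : ℝ :=
  if (Tset U n)ᶜ.Nonempty then min (Metric.infDist x (Tset U n)ᶜ) (rad n) else rad n

lemma tau_nonneg (U : K → Set K) (n : ℕ) (x : K) : 0 ≤ tau U n x := by
  rw [tau]; split
  · exact le_min Metric.infDist_nonneg (rad_pos n).le
  · exact (rad_pos n).le

lemma tau_le_rad (U : K → Set K) (n : ℕ) (x : K) : tau U n x ≤ rad n := by
  rw [tau]; split
  · exact min_le_right _ _
  · exact le_rfl

lemma tau_cont (U : K → Set K) (n : ℕ) : Continuous (tau U n) := by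
  unfold tau; split
  · exact (Metric.continuous_infDist_pt _).min continuous_const
  · exact continuous_const

lemma tau_eq_zero {U : K → Set K} {n : ℕ} {x : K} (hx : x ∉ Tset U n) : tau U n x = 0 := by
  rw [tau, if_pos ⟨x, hx⟩,
    Metric.infDist_zero_of_mem (show x ∈ (Tset U n)ᶜ from hx)]
  exact min_eq_left (rad_pos n).le

lemma tau_pos {U : K → Set K} {n : ℕ} {x : K} (hx : x ∈ Tset U n) : 0 < tau U n x := by
  rw [tau]; split
  · refine lt_min ?_ (rad_pos n)
    rw [← (isClosed_compl_iff.2 (Tset_open U n)).notMem_iff_infDist_pos (by assumption)]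
    simpa using hx
  · exact rad_pos n

lemma tau_norm_le (U : K → Set K) (n : ℕ) (x : K) : ‖tau U n x‖ ≤ rad n := by
  rw [Real.norm_of_nonneg (tau_nonneg U n x)]; exact tau_le_rad U n x

lemma tau_summable (U : K → Set K) (x : K) : Summable fun n => tau U n x :=
  Summable.of_nonneg_of_le (fun n => tau_nonneg U n x) (fun n => tau_le_rad U n x) rad_summable

def Zf (U : K → Set K) (x : K) : ℝ := ∑' n, tau U n x

lemma Zf_cont (U : K → Set K) : Continuous (Zf U) :=
  continuous_tsum (fun n => tau_cont U n) rad_summable (fun n x => tau_norm_le U n x)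

lemma Zf_pos {U : K → Set K} (hUo : ∀ x, IsOpen (U x)) (hUm : ∀ x, x ∈ U x) (x : K) :
    0 < Zf U x := by
  obtain ⟨n, hn⟩ := cover hUo hUm x
  exact Summable.tsum_pos (tau_summable U x) (fun n => tau_nonneg U n x) n (tau_pos hn)

lemma Zf_ne_zero {U : K → Set K} (hUo : ∀ x, IsOpen (U x)) (hUm : ∀ x, x ∈ U x) (x : K) :
    Zf U x ≠ 0 := (Zf_pos hUo hUm x).ne'

lemma tau_tsum_smul {U : K → Set K} (x : K) (a : ℂ) :
    ∑' n, tau U n x • a = Zf U x • a :=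
  Summable.tsum_smul_const (tau_summable U x) a

/-- Patch a family of local functions into a single function supported on `Tset U n`,
weighted by `tau U n`. -/
def patch (U : K → Set K) (h : ∀ x, U x → ℂ) (n : ℕ) (k : K) : ℂ :=
  if hk : k ∈ U (pIdx U n k) ∧ k ∈ Tset U n then tau U n k • h (pIdx U n k) ⟨k, hk.1⟩ else 0

lemma patch_eq {U : K → Set K} (hUm : ∀ x, x ∈ U x) (h : ∀ x, U x → ℂ) {n : ℕ} {k : K}
    (hk : k ∈ Tset U n) :
    patch U h n k = tau U n k • h (pIdx U n k) ⟨k, pIdx_mem hUm hk⟩ := by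
  rw [patch, dif_pos ⟨pIdx_mem hUm hk, hk⟩]

lemma patch_eq_zero {U : K → Set K} (h : ∀ x, U x → ℂ) {n : ℕ} {k : K}
    (hk : k ∉ Tset U n) : patch U h n k = 0 := by
  rw [patch, dif_neg (fun hc => hk hc.2)]

lemma patch_norm_le {U : K → Set K} {C : ℝ} (hC : 0 ≤ C) (h : ∀ x, U x → ℂ)
    (hb : ∀ x u, ‖h x u‖ ≤ C) (n : ℕ) (k : K) :
    ‖patch U h n k‖ ≤ C * tau U n k := by
  rw [patch]; split
  · rw [norm_smul, Real.norm_of_nonneg (tau_nonneg U n k), mul_comm]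
    exact mul_le_mul_of_nonneg_right (hb _ _) (tau_nonneg U n k)
  · simpa using mul_nonneg hC (tau_nonneg U n k)


lemma val_congr {U : K → Set K} (h : ∀ x, U x → ℂ) {α β : K} (hab : α = β) {k : K}
    (hk : k ∈ U α) : h α ⟨k, hk⟩ = h β ⟨k, hab ▸ hk⟩ := by subst hab; rfl

lemma extU_continuousOn {U : K → Set K} (h : ∀ x, U x → ℂ) (hc : ∀ x, Continuous (h x))
    (α : K) : ContinuousOn (fun k => if hk : k ∈ U α then h α ⟨k, hk⟩ else 0) (U α) := by
  rw [continuousOn_iff_continuous_restrict]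
  convert hc α using 1
  funext u
  exact dif_pos u.2

lemma patch_cont {U : K → Set K} (hUo : ∀ x, IsOpen (U x)) (hUm : ∀ x, x ∈ U x)
    {C : ℝ} (hC : 0 ≤ C) (h : ∀ x, U x → ℂ) (hc : ∀ x, Continuous (h x))
    (hb : ∀ x u, ‖h x u‖ ≤ C) (n : ℕ) : Continuous (patch U h n) := by
  rw [continuous_iff_continuousAt]
  intro k₀
  by_cases hk₀ : k₀ ∈ Tset U n
  · set V := Tset U n ∩ Metric.ball k₀ (rad n) with hV
    have hVopen : IsOpen V := (Tset_open U n).inter Metric.isOpen_ball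
    have hk₀V : k₀ ∈ V := ⟨hk₀, Metric.mem_ball_self (rad_pos n)⟩
    have hidx : ∀ k ∈ V, pIdx U n k = pIdx U n k₀ := fun k hk =>
      pIdx_loc hUm hk.1 hk₀ (le_of_lt (Metric.mem_ball.1 hk.2))
    have hVsub : V ⊆ U (pIdx U n k₀) := fun k hk =>
      hidx k hk ▸ pIdx_mem hUm hk.1
    have hagree : ∀ k ∈ V, patch U h n k =
        tau U n k • (if hk : k ∈ U (pIdx U n k₀) then h (pIdx U n k₀) ⟨k, hk⟩ else 0) := by
      intro k hk
      rw [patch_eq hUm h hk.1, dif_pos (hVsub hk), val_congr h (hidx k hk)]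
    have hcont : ContinuousAt (fun k => tau U n k •
        (if hk : k ∈ U (pIdx U n k₀) then h (pIdx U n k₀) ⟨k, hk⟩ else 0)) k₀ := by
      refine ContinuousOn.continuousAt ?_ (hVopen.mem_nhds hk₀V)
      exact ((tau_cont U n).continuousOn).smul ((extU_continuousOn h hc _).mono hVsub)
    refine hcont.congr ?_
    exact Filter.eventuallyEq_of_mem (hVopen.mem_nhds hk₀V) (fun k hk => (hagree k hk).symm)
  · have hz : patch U h n k₀ = 0 := patch_eq_zero h hk₀
    rw [ContinuousAt, hz]
    refine squeeze_zero_norm (fun k => patch_norm_le hC h hb n k) ?_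
    have := ((continuous_const (y := C)).mul (tau_cont U n)).tendsto k₀
    rw [Pi.mul_apply, tau_eq_zero hk₀, mul_zero] at this
    exact this

lemma patch_hasSum {U : K → Set K} (hUm : ∀ x, x ∈ U x) (g : ∀ x, U x → ℂ)
    (φl : ∀ x, ℕ → U x → ℂ) (hs : ∀ x u, HasSum (fun j => φl x j u) (g x u)) (n : ℕ) (k : K) :
    HasSum (fun j => patch U (fun x => φl x j) n k) (patch U g n k) := by
  by_cases hk : k ∈ Tset U n
  · simp only [patch_eq hUm _ hk]
    exact (hs _ _).const_smul _
  · simp only [patch_eq_zero _ hk]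
    exact hasSum_zero

lemma patch_tsum_nnnorm {U : K → Set K} (hUm : ∀ x, x ∈ U x) (φl : ∀ x, ℕ → U x → ℂ)
    {μr : ℝ} (hb : ∀ x (u : U x), ∑' j, (‖φl x j u‖₊ : ℝ≥0∞) ≤ ENNReal.ofReal μr)
    (n : ℕ) (k : K) :
    ∑' j, (‖patch U (fun x => φl x j) n k‖₊ : ℝ≥0∞) ≤
      ENNReal.ofReal (tau U n k) * ENNReal.ofReal μr := by
  by_cases hk : k ∈ Tset U n
  · have heq : ∀ j, (‖patch U (fun x => φl x j) n k‖₊ : ℝ≥0∞) =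
        ENNReal.ofReal (tau U n k) * (‖φl (pIdx U n k) j ⟨k, pIdx_mem hUm hk⟩‖₊ : ℝ≥0∞) := by
      intro j
      rw [patch_eq hUm _ hk, nnnorm_smul, ENNReal.coe_mul,
        ← enorm_eq_nnnorm, Real.enorm_eq_ofReal (tau_nonneg U n k)]
    rw [tsum_congr heq, ENNReal.tsum_mul_left]
    exact mul_le_mul_right (hb _ _) _
  · simp [patch_eq_zero _ hk]

lemma norm_le_of_hasSum {φ : ℕ → ℂ} {s : ℂ} {μ : ℝ} (hμ : 0 ≤ μ) (hsum : HasSum φ s)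
    (hb : ∑' j, (‖φ j‖₊ : ℝ≥0∞) ≤ ENNReal.ofReal μ) : ‖s‖ ≤ μ := by
  have hfin : ∑' j, (‖φ j‖₊ : ℝ≥0∞) ≠ ⊤ := (lt_of_le_of_lt hb ofReal_lt_top).ne
  have hsummable : Summable (fun j => ‖φ j‖₊) := ENNReal.tsum_coe_ne_top_iff_summable.1 hfin
  have hsn : Summable (fun j => ‖φ j‖) := by
    simpa only [coe_nnnorm] using NNReal.summable_coe.2 hsummable
  have h1 : ‖s‖ ≤ ∑' j, ‖φ j‖ := hsum.tsum_eq ▸ norm_tsum_le_tsum_norm hsn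
  have h2 : ENNReal.ofReal (∑' j, ‖φ j‖) ≤ ENNReal.ofReal μ := by
    rw [ENNReal.ofReal_tsum_of_nonneg (fun j => norm_nonneg _) hsn]
    simpa only [ofReal_norm, enorm_eq_nnnorm] using hb
  exact le_trans h1 ((ENNReal.ofReal_le_ofReal_iff hμ).1 h2)

lemma norm_term_le {φ : ℕ → ℂ} {μ : ℝ} (hμ : 0 ≤ μ)
    (hb : ∑' j, (‖φ j‖₊ : ℝ≥0∞) ≤ ENNReal.ofReal μ) (j : ℕ) : ‖φ j‖ ≤ μ := by
  have h := (ENNReal.le_tsum j).trans hb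
  rw [← enorm_eq_nnnorm, ← ofReal_norm] at h
  exact (ENNReal.ofReal_le_ofReal_iff hμ).1 h


lemma glue {U : K → Set K} (hUo : ∀ x, IsOpen (U x)) (hUm : ∀ x, x ∈ U x) {μr : ℝ}
    (hμ : 0 ≤ μr) (g : ∀ x, U x → ℂ) (φl : ∀ x, ℕ → U x → ℂ)
    (hc : ∀ x j, Continuous (φl x j))
    (hs : ∀ x u, HasSum (fun j => φl x j u) (g x u))
    (hb : ∀ x (u : U x), ∑' j, (‖φl x j u‖₊ : ℝ≥0∞) ≤ ENNReal.ofReal μr) :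
    ∃ Φ : ℕ → K → ℂ,
      IsDRep (fun k => (Zf U k)⁻¹ • ∑' n, patch U g n k) Φ ∧ DBound Φ ≤ ENNReal.ofReal μr := by
  set e : ℕ ≃ ℕ × ℕ := (Denumerable.eqv (ℕ × ℕ)).symm with he
  set P : ℕ × ℕ → K → ℂ := fun p k => (Zf U k)⁻¹ • patch U (fun x => φl x p.2) p.1 k with hP
  have hgb : ∀ x (u : U x), ‖g x u‖ ≤ μr := fun x u => norm_le_of_hasSum hμ (hs x u) (hb x u)
  have hφb1 : ∀ x j (u : U x), ‖φl x j u‖ ≤ μr := fun x j u => norm_term_le hμ (hb x u) j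
  have hPcont : ∀ p, Continuous (P p) := fun p =>
    (((Zf_cont U).inv₀ (Zf_ne_zero hUo hUm))).smul
      (patch_cont hUo hUm hμ (fun x => φl x p.2) (fun x => hc x p.2)
        (fun x u => hφb1 x p.2 u) p.1)
  have hPbound : ∀ k, ∑' (p : ℕ × ℕ), (‖P p k‖₊ : ℝ≥0∞) ≤ ENNReal.ofReal μr := by
    intro k
    have hz := Zf_pos hUo hUm k
    calc ∑' (p : ℕ × ℕ), (‖P p k‖₊ : ℝ≥0∞)
        = ∑' (n : ℕ) (j : ℕ), (‖P (n, j) k‖₊ : ℝ≥0∞) :=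
          ENNReal.tsum_prod (f := fun n j => (‖P (n, j) k‖₊ : ℝ≥0∞))
      _ = ∑' (n : ℕ), (‖(Zf U k)⁻¹‖₊ : ℝ≥0∞) *
            ∑' (j : ℕ), (‖patch U (fun x => φl x j) n k‖₊ : ℝ≥0∞) := by
          refine tsum_congr fun n => ?_
          rw [← ENNReal.tsum_mul_left]
          exact tsum_congr fun j => by rw [hP]; rw [nnnorm_smul, ENNReal.coe_mul]
      _ ≤ ∑' (n : ℕ), (‖(Zf U k)⁻¹‖₊ : ℝ≥0∞) *
            (ENNReal.ofReal (tau U n k) * ENNReal.ofReal μr) :=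
          ENNReal.tsum_le_tsum fun n => mul_le_mul_right (patch_tsum_nnnorm hUm φl hb n k) _
      _ = (‖(Zf U k)⁻¹‖₊ : ℝ≥0∞) * ENNReal.ofReal μr *
            ∑' (n : ℕ), ENNReal.ofReal (tau U n k) := by
          rw [← ENNReal.tsum_mul_left]
          exact tsum_congr fun n => by ring
      _ = ENNReal.ofReal ((Zf U k)⁻¹) * ENNReal.ofReal μr * ENNReal.ofReal (Zf U k) := by
          rw [← enorm_eq_nnnorm, Real.enorm_eq_ofReal (inv_nonneg.2 hz.le),
            ← ENNReal.ofReal_tsum_of_nonneg (fun n => tau_nonneg U n k) (tau_summable U k)]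
          rfl
      _ = ENNReal.ofReal ((Zf U k)⁻¹ * Zf U k) * ENNReal.ofReal μr := by
          rw [ENNReal.ofReal_mul (inv_nonneg.2 hz.le)]
          ring
      _ = ENNReal.ofReal μr := by
          rw [inv_mul_cancel₀ hz.ne', ENNReal.ofReal_one, one_mul]
  have hPsum : ∀ k, HasSum (fun p : ℕ × ℕ => P p k)
      ((Zf U k)⁻¹ • ∑' n, patch U g n k) := by
    intro k
    have hsummable : Summable (fun p : ℕ × ℕ => P p k) := by
      apply Summable.of_nnnorm
      exact ENNReal.tsum_coe_ne_top_iff_summable.1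
        (lt_of_le_of_lt (hPbound k) ofReal_lt_top).ne
    have hfib : ∀ n, HasSum (fun j => P (n, j) k) ((Zf U k)⁻¹ • patch U g n k) := fun n =>
      (patch_hasSum hUm g φl hs n k).const_smul _
    have h1 : HasSum (fun n => (Zf U k)⁻¹ • patch U g n k) (∑' p : ℕ × ℕ, P p k) :=
      hsummable.hasSum.prod_fiberwise hfib
    have hgsum : Summable (fun n => patch U g n k) := by
      refine Summable.of_norm_bounded (rad_summable.mul_left μr)
        fun n => ?_
      exact (patch_norm_le hμ g (fun x u => hgb x u) n k).trans
        (mul_le_mul_of_nonneg_left (tau_le_rad U n k) hμ)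
    have h2 : HasSum (fun n => (Zf U k)⁻¹ • patch U g n k)
        ((Zf U k)⁻¹ • ∑' n, patch U g n k) := hgsum.hasSum.const_smul _
    exact (h1.unique h2) ▸ hsummable.hasSum
  refine ⟨fun m k => P (e m) k, ⟨fun m => hPcont (e m), fun k => ?_⟩, ?_⟩
  · exact (Equiv.hasSum_iff e (f := fun p => P p k)).2 (hPsum k)
  · rw [DBound]
    refine iSup_le fun k => ?_
    exact le_trans (le_of_eq (e.tsum_eq (fun p => (‖P p k‖₊ : ℝ≥0∞)))) (hPbound k)


lemma exists_rep_of_DNorm_lt {f : K → ℂ} {c : ℝ≥0∞} (h : DNorm f < c) :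
    ∃ φ, IsDRep f φ ∧ DBound φ < c := by
  rw [DNorm] at h
  obtain ⟨φ, hφ⟩ := iInf_lt_iff.1 h
  obtain ⟨hrep, hlt⟩ := iInf_lt_iff.1 hφ
  exact ⟨φ, hrep, hlt⟩

lemma DNorm_le_of_rep {f : K → ℂ} {φ : ℕ → K → ℂ} (h : IsDRep f φ) :
    DNorm f ≤ DBound φ := by
  rw [DNorm]
  exact (iInf_le _ φ).trans (iInf_le _ h)

lemma part_a {lam ε : ℝ} (hlam : 0 < lam) (hε : 0 < ε) (f : K → ℂ)
    (h : ∀ x : K, ∃ U : Set K, IsOpen U ∧ x ∈ U ∧ MemD (fun y : U => f y.1) ∧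
      DNorm (fun y : U => f y.1) ≤ ENNReal.ofReal lam) :
    ∃ Φ, IsDRep f Φ ∧ DBound Φ ≤ ENNReal.ofReal (lam + ε) := by
  have hμ : (0:ℝ) ≤ lam + ε := by linarith
  set U : K → Set K := fun x => (h x).choose with hU
  have hUo : ∀ x, IsOpen (U x) := fun x => (h x).choose_spec.1
  have hUm : ∀ x, x ∈ U x := fun x => (h x).choose_spec.2.1
  have hlt : ∀ x, DNorm (fun y : U x => f y.1) < ENNReal.ofReal (lam + ε) := fun x =>
    lt_of_le_of_lt (h x).choose_spec.2.2.2
      ((ENNReal.ofReal_lt_ofReal_iff (by linarith)).2 (by linarith))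
  choose φl hrep hbd using fun x => exists_rep_of_DNorm_lt (hlt x)
  have hb : ∀ x (u : U x), ∑' j, (‖φl x j u‖₊ : ℝ≥0∞) ≤ ENNReal.ofReal (lam + ε) := by
    intro x u
    have h1 := (hbd x).le
    rw [DBound] at h1
    exact (le_iSup (fun u : U x => ∑' j, (‖φl x j u‖₊ : ℝ≥0∞)) u).trans h1
  obtain ⟨Φ, hΦrep, hΦbd⟩ := glue hUo hUm hμ (fun x => fun u : U x => f u.1) φl
    (fun x j => (hrep x).1 j) (fun x u => (hrep x).2 u) hb
  have hSf : (fun k => (Zf U k)⁻¹ • ∑' n, patch U (fun x => fun u : U x => f u.1) n k) = f := by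
    funext k
    have hpt : ∀ n, patch U (fun x => fun u : U x => f u.1) n k = tau U n k • f k := by
      intro n
      by_cases hk : k ∈ Tset U n
      · rw [patch_eq hUm _ hk]
      · rw [patch_eq_zero _ hk, tau_eq_zero hk, zero_smul]
    rw [tsum_congr hpt, tau_tsum_smul, smul_smul, inv_mul_cancel₀ (Zf_ne_zero hUo hUm k),
      one_smul]
  exact ⟨Φ, hSf ▸ hΦrep, hΦbd⟩

lemma part_b {lam ε C : ℝ} (hlam : 0 < lam) (hε : 0 < ε) (f : K → ℂ) (hC : ∀ k, ‖f k‖ ≤ C)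
    (h : ∀ x : K, ∃ U : Set K, IsOpen U ∧ x ∈ U ∧ MemD (fun y : U => f y.1) ∧
      qDNorm (fun y : U => f y.1) ≤ ENNReal.ofReal lam) :
    qDNorm f ≤ ENNReal.ofReal (lam + ε) := by
  have hμ : (0:ℝ) ≤ lam + ε := by linarith
  set U : K → Set K := fun x => (h x).choose with hU
  have hUo : ∀ x, IsOpen (U x) := fun x => (h x).choose_spec.1
  have hUm : ∀ x, x ∈ U x := fun x => (h x).choose_spec.2.1
  have hlt : ∀ x, qDNorm (fun y : U x => f y.1) < ENNReal.ofReal (lam + ε) := fun x =>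
    lt_of_le_of_lt (h x).choose_spec.2.2.2
      ((ENNReal.ofReal_lt_ofReal_iff (by linarith)).2 (by linarith))
  have hext : ∀ x, ∃ χx : U x → ℂ, (Continuous χx ∧ ∃ Cx : ℝ, ∀ u, ‖χx u‖ ≤ Cx) ∧
      DNorm ((fun y : U x => f y.1) - χx) < ENNReal.ofReal (lam + ε) := by
    intro x
    have hq := hlt x
    rw [qDNorm] at hq
    obtain ⟨χx, h1⟩ := iInf_lt_iff.1 hq
    obtain ⟨hχprop, h2⟩ := iInf_lt_iff.1 h1
    exact ⟨χx, hχprop, h2⟩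
  choose χ hχp hχd using hext
  choose φl hrep hbd using fun x => exists_rep_of_DNorm_lt (hχd x)
  have hb : ∀ x (u : U x), ∑' j, (‖φl x j u‖₊ : ℝ≥0∞) ≤ ENNReal.ofReal (lam + ε) := by
    intro x u
    have h1 := (hbd x).le
    rw [DBound] at h1
    exact (le_iSup (fun u : U x => ∑' j, (‖φl x j u‖₊ : ℝ≥0∞)) u).trans h1
  set C' : ℝ := |C| + (lam + ε) with hC'
  have hC'0 : 0 ≤ C' := by positivity
  have hχb : ∀ x (u : U x), ‖χ x u‖ ≤ C' := by
    intro x u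
    have h1 : ‖((fun y : U x => f y.1) - χ x) u‖ ≤ lam + ε :=
      norm_le_of_hasSum hμ ((hrep x).2 u) (hb x u)
    have h2 : ‖χ x u‖ ≤ ‖f u.1‖ + ‖((fun y : U x => f y.1) - χ x) u‖ := by
      have h4 := norm_sub_le (f u.1) (f u.1 - χ x u)
      rw [show f ↑u - (f ↑u - χ x u) = χ x u by ring] at h4
      exact h4
    have h3 : ‖f u.1‖ ≤ |C| := (hC u.1).trans (le_abs_self C)
    rw [hC']
    linarith
  have hpnorm : ∀ n (k : K), ‖patch U χ n k‖ ≤ C' * rad n := fun n k =>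
    (patch_norm_le hC'0 χ hχb n k).trans
      (mul_le_mul_of_nonneg_left (tau_le_rad U n k) hC'0)
  have hGcont : Continuous (fun k => ∑' n, patch U χ n k) :=
    continuous_tsum (fun n => patch_cont hUo hUm hC'0 χ (fun x => (hχp x).1) hχb n)
      (rad_summable.mul_left C') hpnorm
  set χt : K → ℂ := fun k => (Zf U k)⁻¹ • ∑' n, patch U χ n k with hχt
  have hχtcont : Continuous χt :=
    ((Zf_cont U).inv₀ (Zf_ne_zero hUo hUm)).smul hGcont
  have hBsum : ∀ k : K, Summable fun n => ‖patch U χ n k‖ := fun k =>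
    Summable.of_nonneg_of_le (fun n => norm_nonneg _) (fun n => hpnorm n k)
      (rad_summable.mul_left C')
  have hχtb : ∀ k, ‖χt k‖ ≤ C' := by
    intro k
    have hz := Zf_pos hUo hUm k
    have h1 : ‖∑' n, patch U χ n k‖ ≤ ∑' n, ‖patch U χ n k‖ :=
      norm_tsum_le_tsum_norm (hBsum k)
    have h2 : ∑' n, ‖patch U χ n k‖ ≤ ∑' n, C' * tau U n k :=
      Summable.tsum_le_tsum (fun n => patch_norm_le hC'0 χ hχb n k) (hBsum k)
        ((tau_summable U k).mul_left C')
    have h3 : ∑' n, C' * tau U n k = C' * Zf U k := by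
      rw [tsum_mul_left]; rfl
    rw [hχt]
    simp only [norm_smul, Real.norm_eq_abs, abs_of_pos (inv_pos.2 hz)]
    calc (Zf U k)⁻¹ * ‖∑' n, patch U χ n k‖ ≤ (Zf U k)⁻¹ * (C' * Zf U k) := by
          have := h1.trans (h2.trans_eq h3)
          exact mul_le_mul_of_nonneg_left this (inv_nonneg.2 hz.le)
      _ = C' := by field_simp
  obtain ⟨Φ, hΦrep, hΦbd⟩ := glue hUo hUm hμ (fun x => (fun y : U x => f y.1) - χ x) φl
    (fun x j => (hrep x).1 j) (fun x u => (hrep x).2 u) hb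
  have hSf : (fun k => (Zf U k)⁻¹ •
      ∑' n, patch U (fun x => (fun y : U x => f y.1) - χ x) n k) = f - χt := by
    funext k
    have hpt : ∀ n, patch U (fun x => (fun y : U x => f y.1) - χ x) n k =
        tau U n k • f k - patch U χ n k := by
      intro n
      by_cases hk : k ∈ Tset U n
      · rw [patch_eq hUm _ hk, patch_eq hUm _ hk, Pi.sub_apply, smul_sub]
      · rw [patch_eq_zero _ hk, patch_eq_zero _ hk, tau_eq_zero hk, zero_smul, sub_zero]
    have hA : Summable fun n => tau U n k • f k := (tau_summable U k).smul_const _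
    have hB : Summable fun n => patch U χ n k :=
      Summable.of_norm_bounded (rad_summable.mul_left C') (fun n => hpnorm n k)
    rw [tsum_congr hpt, Summable.tsum_sub hA hB, tau_tsum_smul, Pi.sub_apply, hχt, smul_sub,
      smul_smul, inv_mul_cancel₀ (Zf_ne_zero hUo hUm k), one_smul]
  rw [hSf] at hΦrep
  have hle : qDNorm f ≤ DNorm (f - χt) := by
    rw [qDNorm]
    exact (iInf_le _ χt).trans (iInf_le _ ⟨hχtcont, C', hχtb⟩)
  exact hle.trans ((DNorm_le_of_rep hΦrep).trans hΦbd)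

end Stmt7


end AuxStmt7

/-- localization principle for the `D`-norm and the quotient `D`-seminorm. -/
theorem stmt7 {K : Type u} [MetricSpace K] (lam : ℝ) (hlam : 0 < lam)
    (f : K → ℂ) (hb : ∃ C : ℝ, ∀ k, ‖f k‖ ≤ C) :
    ((∀ x : K, ∃ U : Set K, IsOpen U ∧ x ∈ U ∧
        MemD (fun y : U => f y.1) ∧ DNorm (fun y : U => f y.1) ≤ ENNReal.ofReal lam) →
      MemD f ∧ DNorm f ≤ ENNReal.ofReal lam) ∧
    ((∀ x : K, ∃ U : Set K, IsOpen U ∧ x ∈ U ∧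
        MemD (fun y : U => f y.1) ∧ qDNorm (fun y : U => f y.1) ≤ ENNReal.ofReal lam) →
      qDNorm f ≤ ENNReal.ofReal lam) := by
  constructor
  · intro h
    constructor
    · obtain ⟨Φ, hrep, hbd⟩ := Stmt7.part_a hlam one_pos f h
      exact ⟨Φ, hrep, lt_of_le_of_lt hbd ENNReal.ofReal_lt_top⟩
    · refine ENNReal.le_of_forall_pos_le_add fun ε hε _ => ?_
      obtain ⟨Φ, hrep, hbd⟩ := Stmt7.part_a hlam (NNReal.coe_pos.2 hε) f h
      refine (Stmt7.DNorm_le_of_rep hrep).trans (hbd.trans ?_)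
      rw [ENNReal.ofReal_add hlam.le ε.coe_nonneg, ENNReal.ofReal_coe_nnreal]
  · intro h
    obtain ⟨C, hC⟩ := hb
    refine ENNReal.le_of_forall_pos_le_add fun ε hε _ => ?_
    refine (Stmt7.part_b hlam (NNReal.coe_pos.2 hε) f hC h).trans ?_
    rw [ENNReal.ofReal_add hlam.le ε.coe_nonneg, ENNReal.ofReal_coe_nnreal]
end
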